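/- arXiv:1108.3588 — 9 statements merged into one kernel-verified Lean document; each statement's English description precedes it below -/
import Mathlib

section
/- Let A be the 2n×2n integer block matrix A = [[0, B],[Bᵀ, 0]], where 0 denotes the n×n zero matrix. There exists a signing vector s on {1,…,2n} with s_i·(A⁻¹)_{i,j}·s_j = |(A⁻¹)_{i,j}| for all i, j if and only if there exists a signing vector t on {1,…,n} with t_i·(B⁻¹)_{i,j}·t_j = |(B⁻¹)_{i,j}| for all i, j. -/
open Matrix

/-- For `B` an `n × n` upper uni-triangular integer matrix and
`A = [[0, B], [Bᵀ, 0]]`, there is a signing vector `s` on the `2n` indices with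
`s i * A⁻¹ i j * s j = |A⁻¹ i j|` for all `i, j` iff there is a signing vector `t`
on the `n` indices with `t i * B⁻¹ i j * t j = |B⁻¹ i j|` for all `i, j`. -/
theorem stmt1 {n : ℕ} (hn : 1 ≤ n) (B : Matrix (Fin n) (Fin n) ℤ)
    (h1 : ∀ i, B i i = 1) (h2 : ∀ i j : Fin n, j < i → B i j = 0)
    (A : Matrix (Fin n ⊕ Fin n) (Fin n ⊕ Fin n) ℤ)
    (hA : A = Matrix.fromBlocks 0 B Bᵀ 0) :
    (∃ s : Fin n ⊕ Fin n → ℤ, (∀ i, s i = 1 ∨ s i = -1) ∧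
        ∀ i j, s i * A⁻¹ i j * s j = |A⁻¹ i j|) ↔
      (∃ t : Fin n → ℤ, (∀ i, t i = 1 ∨ t i = -1) ∧
        ∀ i j, t i * B⁻¹ i j * t j = |B⁻¹ i j|) := by
  have hBT : B.BlockTriangular id := fun i j h => h2 i j h
  have hdet : B.det = 1 := by
    rw [Matrix.det_of_upperTriangular hBT]
    simp [h1]
  have hu : IsUnit B.det := by rw [hdet]; exact isUnit_one
  haveI : Invertible B := B.invertibleOfIsUnitDet hu
  have hmul : B * B⁻¹ = 1 := Matrix.mul_nonsing_inv B hu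
  have hmul' : B⁻¹ * B = 1 := Matrix.nonsing_inv_mul B hu
  have hinvT : B⁻¹.BlockTriangular id := blockTriangular_inv_of_blockTriangular hBT
  -- diagonal of B⁻¹ is 1
  have hdiag : ∀ i, B⁻¹ i i = 1 := by
    intro i
    have := congrFun (congrFun hmul i) i
    rw [Matrix.mul_apply] at this
    rw [Matrix.one_apply_eq] at this
    rw [Finset.sum_eq_single i] at this
    · rw [h1 i, one_mul] at this; exact this
    · intro k _ hk
      rcases lt_or_gt_of_ne hk with h | h
      · rw [h2 i k h, zero_mul]
      · rw [hinvT (show (id i : Fin n) < id k from h), mul_zero]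
    · intro h; exact absurd (Finset.mem_univ i) h
  -- A⁻¹
  have hAinv : A⁻¹ = Matrix.fromBlocks 0 (B⁻¹)ᵀ B⁻¹ 0 := by
    apply Matrix.inv_eq_right_inv
    rw [hA, Matrix.fromBlocks_multiply]
    have : Bᵀ * (B⁻¹)ᵀ = 1 := by rw [← Matrix.transpose_mul, hmul', Matrix.transpose_one]
    simp [hmul, this, Matrix.fromBlocks_one]
  constructor
  · rintro ⟨s, hs1, hs2⟩
    refine ⟨fun i => s (Sum.inl i), fun i => hs1 _, fun i j => ?_⟩
    have heq : ∀ i, s (Sum.inl i) = s (Sum.inr i) := by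
      intro i
      have := hs2 (Sum.inr i) (Sum.inl i)
      rw [hAinv] at this
      simp only [Matrix.fromBlocks_apply₂₁, hdiag i] at this
      have h1' : s (Sum.inr i) * s (Sum.inl i) = 1 := by
        simpa using this
      rcases hs1 (Sum.inl i) with h | h <;> rcases hs1 (Sum.inr i) with h' | h' <;>
        simp [h, h'] at h1' ⊢
    have := hs2 (Sum.inr i) (Sum.inl j)
    rw [hAinv] at this
    simp only [Matrix.fromBlocks_apply₂₁] at this
    show s (Sum.inl i) * B⁻¹ i j * s (Sum.inl j) = |B⁻¹ i j|
    rw [heq i]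
    linarith [this]
  · rintro ⟨t, ht1, ht2⟩
    refine ⟨Sum.elim t t, fun i => by cases i <;> exact ht1 _, fun i j => ?_⟩
    rw [hAinv]
    cases i <;> cases j <;>
      simp only [Matrix.fromBlocks_apply₁₁, Matrix.fromBlocks_apply₁₂,
        Matrix.fromBlocks_apply₂₁, Matrix.fromBlocks_apply₂₂, Sum.elim_inl, Sum.elim_inr,
        Matrix.zero_apply, Matrix.transpose_apply, mul_zero, zero_mul, abs_zero]
    · rename_i a b
      have := ht2 b a
      linarith
    · exact ht2 _ _
end

section
/- Suppose there is a signing vector s with s_i·(A⁻¹)_{i,j}·s_j = |(A⁻¹)_{i,j}| for all i, j. Then the entrywise absolute value |A⁻¹| is an invertible matrix, and the entrywise absolute value of its inverse equals A, i.e. |(|A⁻¹|)⁻¹| = A. -/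
open Matrix

/-- Let `A` be an invertible `n × n` rational matrix with nonnegative
entries.  If there is a signing vector `s` with `s i * A⁻¹ i j * s j = |A⁻¹ i j|`
for all `i, j`, then the entrywise absolute value `|A⁻¹|` is an invertible matrix and
the entrywise absolute value of its inverse equals `A`, i.e. `|(|A⁻¹|)⁻¹| = A`. -/
theorem stmt2 {n : ℕ} (A : Matrix (Fin n) (Fin n) ℚ)
    (hA : IsUnit A) (hpos : ∀ i j, 0 ≤ A i j)
    (s : Fin n → ℚ) (hs : ∀ i, s i = 1 ∨ s i = -1)
    (hsign : ∀ i j, s i * A⁻¹ i j * s j = |A⁻¹ i j|) :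
    IsUnit (A⁻¹.map (fun x => |x|)) ∧
      ((A⁻¹.map (fun x => |x|))⁻¹).map (fun x => |x|) = A := by
  set D : Matrix (Fin n) (Fin n) ℚ := Matrix.diagonal s with hDdef
  have hss : ∀ i, s i * s i = 1 := by
    intro i; rcases hs i with h | h <;> rw [h] <;> norm_num
  have hDD : D * D = 1 := by
    rw [hDdef, Matrix.diagonal_mul_diagonal]
    ext i j
    by_cases h : i = j
    · subst h; simp [hss i]
    · simp [Matrix.diagonal, h, Matrix.one_apply_ne h]
  have hDunit : IsUnit D := ⟨⟨D, D, hDD, hDD⟩, rfl⟩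
  have hDinv : D⁻¹ = D := Matrix.inv_eq_right_inv hDD
  have hAdet : IsUnit A.det := (Matrix.isUnit_iff_isUnit_det A).mp hA
  have hAinvUnit : IsUnit A⁻¹ :=
    ⟨⟨A⁻¹, A, Matrix.nonsing_inv_mul A hAdet, Matrix.mul_nonsing_inv A hAdet⟩, rfl⟩
  have hB : A⁻¹.map (fun x => |x|) = D * A⁻¹ * D := by
    ext i j
    rw [Matrix.map_apply, ← hsign i j]
    simp [hDdef, Matrix.mul_apply, Matrix.diagonal, Finset.sum_ite_eq,
      Finset.sum_ite_eq']
  have hBunit : IsUnit (A⁻¹.map (fun x => |x|)) := by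
    rw [hB]; exact (hDunit.mul hAinvUnit).mul hDunit
  refine ⟨hBunit, ?_⟩
  have hBinv : (A⁻¹.map (fun x => |x|))⁻¹ = D * A * D := by
    rw [hB, Matrix.mul_inv_rev, Matrix.mul_inv_rev, hDinv,
      Matrix.nonsing_inv_nonsing_inv A hAdet, mul_assoc]
  rw [hBinv]
  ext i j
  have : (D * A * D) i j = s i * A i j * s j := by
    simp [hDdef, Matrix.mul_apply, Matrix.diagonal, Finset.sum_ite_eq,
      Finset.sum_ite_eq']
  rw [Matrix.map_apply, this, abs_mul, abs_mul]
  have h1 : |s i| = 1 := by rcases hs i with h | h <;> rw [h] <;> norm_num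
  have h2 : |s j| = 1 := by rcases hs j with h | h <;> rw [h] <;> norm_num
  rw [h1, h2, abs_of_nonneg (hpos i j)]; ring
end

section
/- If B is signable, then Γ_D is bipartite. -/
open Matrix

/-- A square integer matrix `M` is *signable* if there is a signing vector `s`
(valued in `{+1, -1}`) with `s i * M i j * s j = |M i j|` for all `i, j`. -/
def IsSignable {k : ℕ} (M : Matrix (Fin k) (Fin k) ℤ) : Prop :=
  ∃ s : Fin k → ℤ, (∀ i, s i = 1 ∨ s i = -1) ∧ ∀ i j, s i * M i j * s j = |M i j|

/-- `{i, j}` is an edge of the maximal-path subgraph `Γ_D` of the digraph `D` with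
adjacency matrix `B - 1`: there is an edge from `i` to `j` and no directed path
of length `≥ 2` from `i` to `j`. -/
def GammaEdge {k : ℕ} (B : Matrix (Fin k) (Fin k) ℤ) (i j : Fin k) : Prop :=
  i < j ∧ 1 ≤ B i j ∧ ∀ m : ℕ, 2 ≤ m → ((B - 1) ^ m) i j = 0

/-- The maximal-path subgraph `Γ_D` is bipartite. -/
def GammaBipartite {k : ℕ} (B : Matrix (Fin k) (Fin k) ℤ) : Prop :=
  ∃ c : Fin k → Bool, ∀ i j : Fin k, GammaEdge B i j → c i ≠ c j

open Classical in
/-- The pairing `⟨i,j⟩`: it is `1` on the diagonal, `(-1)^ℓ(i,j)` where `ℓ(i,j)` is the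
length of a longest directed path from `i` to `j` when such a path exists, and `0`
otherwise. -/
noncomputable def pairing {k : ℕ} (B : Matrix (Fin k) (Fin k) ℤ) (i j : Fin k) : ℤ :=
  if i = j then 1
  else if ∃ m : ℕ, 1 ≤ m ∧ ((B - 1) ^ m) i j ≠ 0 then
    (-1 : ℤ) ^ sSup {m : ℕ | 1 ≤ m ∧ ((B - 1) ^ m) i j ≠ 0}
  else 0

/-- `B⁽ᵛ⁾`: the matrix obtained from `B` by replacing every off-diagonal entry in row
`v` and in column `v` by `0` (deleting the vertex `v` from the digraph). -/
def vertexDelete {k : ℕ} (B : Matrix (Fin k) (Fin k) ℤ) (v : Fin k) :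
    Matrix (Fin k) (Fin k) ℤ :=
  Matrix.of fun i j => if i ≠ j ∧ (i = v ∨ j = v) then 0 else B i j

/-- `(i,j)` is a zero pair: no directed path from `i` to `j`. -/
def ZeroPair {k : ℕ} (B : Matrix (Fin k) (Fin k) ℤ) (i j : Fin k) : Prop :=
  ∀ m : ℕ, 1 ≤ m → ((B - 1) ^ m) i j = 0

/-- `(i,j)` is a unit pair: all directed paths from `i` to `j` have length one. -/
def UnitPair {k : ℕ} (B : Matrix (Fin k) (Fin k) ℤ) (i j : Fin k) : Prop :=
  1 ≤ B i j ∧ ∀ m : ℕ, 2 ≤ m → ((B - 1) ^ m) i j = 0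

/-- `(i,j)` is a composite pair: every directed path from `i` to `j` passes through
some fixed intermediate vertex `v`. -/
def CompositePair {k : ℕ} (B : Matrix (Fin k) (Fin k) ℤ) (i j : Fin k) : Prop :=
  ∃ v : Fin k, i < v ∧ v < j ∧ ∀ m : ℕ, 1 ≤ m → ((vertexDelete B v - 1) ^ m) i j = 0

/-- `(i,j)` is a prime pair: `i < j` and `(i,j)` is neither a zero pair, a unit pair,
nor a composite pair. -/
def PrimePair {k : ℕ} (B : Matrix (Fin k) (Fin k) ℤ) (i j : Fin k) : Prop :=
  i < j ∧ ¬ZeroPair B i j ∧ ¬UnitPair B i j ∧ ¬CompositePair B i j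

/-- If `B` is signable, then `Γ_D` is bipartite. -/
theorem stmt3 {n : ℕ} (hn : 1 ≤ n) (B : Matrix (Fin n) (Fin n) ℤ)
    (h1 : ∀ i, B i i = 1) (h2 : ∀ i j : Fin n, j < i → B i j = 0)
    (h3 : ∀ i j : Fin n, i < j → 0 ≤ B i j)
    (hsig : IsSignable B⁻¹) :
    GammaBipartite B := by
  classical
  set N : Matrix (Fin n) (Fin n) ℤ := B - 1 with hNdef
  have hN0 : ∀ i j : Fin n, ¬ i < j → N i j = 0 := by
    intro i j h
    rcases eq_or_ne i j with rfl | hne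
    · simp [hNdef, Matrix.sub_apply, Matrix.one_apply, h1]
    · have : j < i := lt_of_le_of_ne (not_lt.mp h) (Ne.symm hne)
      simp [hNdef, Matrix.sub_apply, Matrix.one_apply, hne, h2 i j this]
  have key : ∀ m : ℕ, ∀ i j : Fin n, (j : ℕ) < (i : ℕ) + m → (N ^ m) i j = 0 := by
    intro m
    induction m with
    | zero =>
      intro i j h
      have hne : i ≠ j := by
        intro he; subst he; omega
      simp [Matrix.one_apply, hne]
    | succ m ih =>
      intro i j h
      rw [pow_succ', Matrix.mul_apply]
      apply Finset.sum_eq_zero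
      intro k _
      by_cases hik : i < k
      · have hk : (k : ℕ) > (i : ℕ) := hik
        have : (N ^ m) k j = 0 := ih k j (by omega)
        simp [this]
      · simp [hN0 i k hik]
  have hNn : N ^ n = 0 := by
    ext i j
    have : (j : ℕ) < (i : ℕ) + n := by have := j.isLt; omega
    simpa using key n i j this
  have hC : B * (∑ m ∈ Finset.range n, (-N) ^ m) = 1 := by
    have hgs := mul_geom_sum (-N) n
    have hNeg : (-N) ^ n = 0 := by
      rw [neg_pow, hNn, mul_zero]
    have hB : -N - 1 = -B := by
      rw [hNdef]; abel
    rw [hB, hNeg, zero_sub, neg_mul] at hgs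
    exact neg_injective hgs
  have hBinv : B⁻¹ = ∑ m ∈ Finset.range n, (-N) ^ m := Matrix.inv_eq_right_inv hC
  have hentry : ∀ i j : Fin n, GammaEdge B i j → B⁻¹ i j = -(B i j) := by
    rintro i j ⟨hij, hb, hm⟩
    have hne : i ≠ j := Fin.ne_of_lt hij
    have hn2 : 2 ≤ n := by
      have h1' : (i : ℕ) < (j : ℕ) := hij
      have := j.isLt; omega
    rw [hBinv, Matrix.sum_apply]
    rw [Finset.sum_eq_single_of_mem 1 (Finset.mem_range.mpr (by omega))]
    · have : (-N) i j = -(N i j) := rfl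
      rw [pow_one, this]
      simp [hNdef, Matrix.sub_apply, Matrix.one_apply, hne]
    · intro m hmem hm1
      have hsm : (-N) ^ m = ((-1 : ℤ) ^ m) • N ^ m := by
        have : -N = (-1 : ℤ) • N := by simp
        rw [this, smul_pow]
      rw [hsm, Matrix.smul_apply]
      rcases Nat.eq_zero_or_pos m with rfl | hpos
      · simp [Matrix.one_apply, hne]
      · have h2m : 2 ≤ m := by omega
        rw [hm m h2m, smul_zero]
  obtain ⟨s, hs, hprod⟩ := hsig
  refine ⟨fun i => decide (s i = 1), ?_⟩
  intro i j he
  have h4 := hentry i j he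
  have hb : 1 ≤ B i j := he.2.1
  have heq := hprod i j
  rw [h4] at heq
  have habs : |(-(B i j))| = B i j := by
    rw [abs_neg]; exact abs_of_pos (by omega)
  rw [habs] at heq
  have hss : s i * s j = -1 := by
    have hBne : B i j ≠ 0 := by omega
    have : (s i * s j) * B i j = (-1) * B i j := by ring_nf; ring_nf at heq; linarith
    exact mul_right_cancel₀ hBne this
  rcases hs i with h | h <;> rcases hs j with h' | h' <;>
    simp [h, h'] at hss ⊢
end

section
/- Suppose Γ_D is bipartite and i < j < k are vertices such that there is a directed path from i to j (some ((B−I)^m)_{i,j} ≠ 0 with m ≥ 1) and a directed path from j to k (some ((B−I)^m)_{j,k} ≠ 0 with m ≥ 1). Then ⟨i,j⟩·⟨j,k⟩ = ⟨i,k⟩. -/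
open Matrix

section Aux

variable {n : ℕ}

private lemma A_off (B : Matrix (Fin n) (Fin n) ℤ) {i j : Fin n} (h : i ≠ j) :
    (B - 1) i j = B i j := by
  simp [Matrix.sub_apply, Matrix.one_apply, h]

private lemma A_zero (B : Matrix (Fin n) (Fin n) ℤ)
    (h1 : ∀ i, B i i = 1) (h2 : ∀ i j : Fin n, j < i → B i j = 0)
    {i j : Fin n} (h : ¬ i < j) : (B - 1) i j = 0 := by
  rcases eq_or_ne i j with rfl | hne
  · simp [Matrix.sub_apply, Matrix.one_apply, h1 i]
  · rw [A_off B hne]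
    exact h2 i j (lt_of_le_of_ne (not_lt.mp h) (Ne.symm hne))

private lemma A_nonneg (B : Matrix (Fin n) (Fin n) ℤ)
    (h1 : ∀ i, B i i = 1) (h2 : ∀ i j : Fin n, j < i → B i j = 0)
    (h3 : ∀ i j : Fin n, i < j → 0 ≤ B i j) (i j : Fin n) :
    0 ≤ (B - 1) i j := by
  by_cases h : i < j
  · rw [A_off B (ne_of_lt h)]; exact h3 i j h
  · rw [A_zero B h1 h2 h]

private lemma pow_nn (B : Matrix (Fin n) (Fin n) ℤ)
    (h1 : ∀ i, B i i = 1) (h2 : ∀ i j : Fin n, j < i → B i j = 0)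
    (h3 : ∀ i j : Fin n, i < j → 0 ≤ B i j) (m : ℕ) (i j : Fin n) :
    0 ≤ ((B - 1) ^ m) i j := by
  induction m generalizing i j with
  | zero => simp [Matrix.one_apply]; positivity
  | succ m ih =>
    rw [pow_succ, Matrix.mul_apply]
    exact Finset.sum_nonneg fun v _ => mul_nonneg (ih i v) (A_nonneg B h1 h2 h3 v j)

private lemma pow_supp (B : Matrix (Fin n) (Fin n) ℤ)
    (h1 : ∀ i, B i i = 1) (h2 : ∀ i j : Fin n, j < i → B i j = 0)
    (m : ℕ) : ∀ i j : Fin n, ((B - 1) ^ m) i j ≠ 0 → (i : ℕ) + m ≤ (j : ℕ) := by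
  induction m with
  | zero =>
    intro i j h
    rcases eq_or_ne i j with rfl | hne
    · omega
    · exact absurd (by simp [Matrix.one_apply, hne]) h
  | succ m ih =>
    intro i j h
    rw [show m + 1 = 1 + m by omega, pow_add, pow_one, Matrix.mul_apply] at h
    obtain ⟨v, -, hv⟩ := Finset.exists_ne_zero_of_sum_ne_zero h
    have h1v : (B - 1) i v ≠ 0 := left_ne_zero_of_mul hv
    have h2v := ih v j (right_ne_zero_of_mul hv)
    have hiv : i < v := by by_contra hc; exact h1v (A_zero B h1 h2 hc)
    have : (i : ℕ) < (v : ℕ) := hiv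
    omega

private lemma bdd (B : Matrix (Fin n) (Fin n) ℤ)
    (h1 : ∀ i, B i i = 1) (h2 : ∀ i j : Fin n, j < i → B i j = 0)
    (a b : Fin n) :
    BddAbove {m : ℕ | 1 ≤ m ∧ ((B - 1) ^ m) a b ≠ 0} := by
  refine ⟨(b : ℕ), fun m hm => ?_⟩
  have := pow_supp B h1 h2 m a b hm.2
  omega

private lemma concat (B : Matrix (Fin n) (Fin n) ℤ)
    (h1 : ∀ i, B i i = 1) (h2 : ∀ i j : Fin n, j < i → B i j = 0)
    (h3 : ∀ i j : Fin n, i < j → 0 ≤ B i j)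
    (p q : ℕ) (a v b : Fin n)
    (hp : ((B - 1) ^ p) a v ≠ 0) (hq : ((B - 1) ^ q) v b ≠ 0) :
    ((B - 1) ^ (p + q)) a b ≠ 0 := by
  have hpos : 0 < ((B - 1) ^ p) a v * ((B - 1) ^ q) v b :=
    lt_of_le_of_ne (mul_nonneg (pow_nn B h1 h2 h3 p a v) (pow_nn B h1 h2 h3 q v b))
      (Ne.symm (mul_ne_zero hp hq))
  have heq : ((B - 1) ^ (p + q)) a b = ∑ w, ((B - 1) ^ p) a w * ((B - 1) ^ q) w b := by
    rw [pow_add, Matrix.mul_apply]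
  have hle : ((B - 1) ^ p) a v * ((B - 1) ^ q) v b
      ≤ ∑ w, ((B - 1) ^ p) a w * ((B - 1) ^ q) w b :=
    Finset.single_le_sum
      (fun w _ => mul_nonneg (pow_nn B h1 h2 h3 p a w) (pow_nn B h1 h2 h3 q w b))
      (Finset.mem_univ v)
  rw [heq]
  exact (lt_of_lt_of_le hpos hle).ne'

private lemma key (B : Matrix (Fin n) (Fin n) ℤ)
    (h1 : ∀ i, B i i = 1) (h2 : ∀ i j : Fin n, j < i → B i j = 0)
    (h3 : ∀ i j : Fin n, i < j → 0 ≤ B i j)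
    (c : Fin n → Bool) (hc : ∀ i j : Fin n, GammaEdge B i j → c i ≠ c j) :
    ∀ g : ℕ, ∀ a b : Fin n, (b : ℕ) ≤ (a : ℕ) + g →
      (∃ m : ℕ, 1 ≤ m ∧ ((B - 1) ^ m) a b ≠ 0) →
      (Odd (sSup {m : ℕ | 1 ≤ m ∧ ((B - 1) ^ m) a b ≠ 0}) ↔ c a ≠ c b) := by
  intro g
  induction g with
  | zero =>
    rintro a b hg ⟨m, hm1, hm2⟩
    have := pow_supp B h1 h2 m a b hm2
    omega
  | succ g ih =>
    rintro a b hg hne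
    have hSbdd := bdd B h1 h2 a b
    have hmem : sSup {m : ℕ | 1 ≤ m ∧ ((B - 1) ^ m) a b ≠ 0}
        ∈ {m : ℕ | 1 ≤ m ∧ ((B - 1) ^ m) a b ≠ 0} := Nat.sSup_mem hne hSbdd
    set L := sSup {m : ℕ | 1 ≤ m ∧ ((B - 1) ^ m) a b ≠ 0} with hLdef
    obtain ⟨hL1, hL2⟩ := hmem
    have hub : ∀ m : ℕ, 1 ≤ m → ((B - 1) ^ m) a b ≠ 0 → m ≤ L :=
      fun m u1 u2 => le_csSup hSbdd ⟨u1, u2⟩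
    have hab : (a : ℕ) + L ≤ (b : ℕ) := pow_supp B h1 h2 L a b hL2
    rcases eq_or_lt_of_le hL1 with hL | hL
    · -- L = 1 : Γ-edge a b
      have hedge : GammaEdge B a b := by
        refine ⟨Fin.lt_def.mpr (by omega), ?_, ?_⟩
        · have hA : (B - 1) a b ≠ 0 := by rwa [← hL, pow_one] at hL2
          have hne' : a ≠ b := fun h => by subst h; omega
          rw [A_off B hne'] at hA
          have := h3 a b (Fin.lt_def.mpr (by omega))
          omega
        · intro m hm
          by_contra hmm
          have := hub m (by omega) hmm
          omega
      exact iff_of_true (by rw [← hL]; exact odd_one) (hc a b hedge)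
    · -- L ≥ 2 : decompose
      obtain ⟨v, hAav, hvb⟩ :
          ∃ v : Fin n, (B - 1) a v ≠ 0 ∧ ((B - 1) ^ (L - 1)) v b ≠ 0 := by
        have hexp : (B - 1) ^ L = (B - 1) * (B - 1) ^ (L - 1) := by
          conv_lhs => rw [show L = 1 + (L - 1) by omega]
          rw [pow_add, pow_one]
        rw [hexp, Matrix.mul_apply] at hL2
        obtain ⟨v, -, hv⟩ := Finset.exists_ne_zero_of_sum_ne_zero hL2
        exact ⟨v, left_ne_zero_of_mul hv, right_ne_zero_of_mul hv⟩
      have hav : (a : ℕ) < (v : ℕ) := by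
        by_contra hcon
        exact hAav (A_zero B h1 h2 (fun h => hcon (Fin.lt_def.mp h)))
      have hvbnat : (v : ℕ) + (L - 1) ≤ (b : ℕ) := pow_supp B h1 h2 (L - 1) v b hvb
      -- Γ-edge a v
      have hGav : GammaEdge B a v := by
        refine ⟨Fin.lt_def.mpr hav, ?_, ?_⟩
        · have hne' : a ≠ v := fun h => by rw [h] at hav; omega
          rw [A_off B hne'] at hAav
          have := h3 a v (Fin.lt_def.mpr hav)
          omega
        · intro m hm
          by_contra hmm
          have := hub (m + (L - 1)) (by omega) (concat B h1 h2 h3 m (L - 1) a v b hmm hvb)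
          omega
      have hcav : c a ≠ c v := hc a v hGav
      -- sSup for (v, b) equals L - 1
      have hSvb : sSup {m : ℕ | 1 ≤ m ∧ ((B - 1) ^ m) v b ≠ 0} = L - 1 := by
        have hub' : ∀ m ∈ {m : ℕ | 1 ≤ m ∧ ((B - 1) ^ m) v b ≠ 0}, m ≤ L - 1 := by
          rintro m ⟨hm1, hm2⟩
          have hA1 : ((B - 1) ^ (1 : ℕ)) a v ≠ 0 := by rwa [pow_one]
          have := hub (1 + m) (by omega) (concat B h1 h2 h3 1 m a v b hA1 hm2)
          omega
        exact le_antisymm (csSup_le ⟨L - 1, ⟨by omega, hvb⟩⟩ hub')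
          (le_csSup (bdd B h1 h2 v b) ⟨by omega, hvb⟩)
      have hOdd : Odd (L - 1) ↔ c v ≠ c b := by
        have := ih v b (by omega) ⟨L - 1, by omega, hvb⟩
        rwa [hSvb] at this
      have hpar : Odd L ↔ ¬ Odd (L - 1) := by
        rw [Nat.odd_iff, Nat.odd_iff]
        omega
      rcases Nat.even_or_odd (L - 1) with p | p
      · have hb : c v = c b := by
          by_contra hcon
          exact (Nat.not_odd_iff_even.mpr p) (hOdd.mpr hcon)
        exact iff_of_true (hpar.mpr (Nat.not_odd_iff_even.mpr p))
          (fun h => hcav (h.trans hb.symm))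
      · have hcvb : c v ≠ c b := hOdd.mp p
        have hccc : c a = c b := by
          revert hcav hcvb
          cases c a <;> cases c v <;> cases c b <;> simp
        exact iff_of_false (fun h => (hpar.mp h) p) (fun h => h hccc)

end Aux

/-- If `Γ_D` is bipartite and `i < j < k` are vertices with a directed
path from `i` to `j` and a directed path from `j` to `k`, then
`⟨i,j⟩ * ⟨j,k⟩ = ⟨i,k⟩`. -/
theorem stmt4 {n : ℕ} (hn : 1 ≤ n) (B : Matrix (Fin n) (Fin n) ℤ)
    (h1 : ∀ i, B i i = 1) (h2 : ∀ i j : Fin n, j < i → B i j = 0)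
    (h3 : ∀ i j : Fin n, i < j → 0 ≤ B i j)
    (hbip : GammaBipartite B)
    (i j k : Fin n) (hij : i < j) (hjk : j < k)
    (hpij : ∃ m : ℕ, 1 ≤ m ∧ ((B - 1) ^ m) i j ≠ 0)
    (hpjk : ∃ m : ℕ, 1 ≤ m ∧ ((B - 1) ^ m) j k ≠ 0) :
    pairing B i j * pairing B j k = pairing B i k := by
  obtain ⟨c, hc⟩ := hbip
  obtain ⟨m1, hm11, hm12⟩ := hpij
  obtain ⟨m2, hm21, hm22⟩ := hpjk
  have hpik : ∃ m : ℕ, 1 ≤ m ∧ ((B - 1) ^ m) i k ≠ 0 :=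
    ⟨m1 + m2, by omega, concat B h1 h2 h3 m1 m2 i j k hm12 hm22⟩
  have e1 := key B h1 h2 h3 c hc n i j (by omega) ⟨m1, hm11, hm12⟩
  have e2 := key B h1 h2 h3 c hc n j k (by omega) ⟨m2, hm21, hm22⟩
  have e3 := key B h1 h2 h3 c hc n i k (by omega) hpik
  rw [pairing, pairing, pairing,
    if_neg (ne_of_lt hij), if_neg (ne_of_lt hjk), if_neg (ne_of_lt (hij.trans hjk)),
    if_pos ⟨m1, hm11, hm12⟩, if_pos ⟨m2, hm21, hm22⟩, if_pos hpik]
  have P : ∀ (a b : Fin n) (L : ℕ), (Odd L ↔ c a ≠ c b) →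
      (-1 : ℤ) ^ L = if c a = c b then 1 else -1 := by
    intro a b L hL
    rcases Nat.even_or_odd L with p | p
    · rw [p.neg_one_pow, if_pos]
      by_contra hcon
      exact (Nat.not_odd_iff_even.mpr p) (hL.mpr hcon)
    · rw [p.neg_one_pow, if_neg (hL.mp p)]
  rw [P i j _ e1, P j k _ e2, P i k _ e3]
  cases hci : c i <;> cases hcj : c j <;> cases hck : c k <;> simp
end

section
/- Suppose Γ_D is bipartite. Then B is signable if and only if ⟨i,j⟩·(B⁻¹)_{i,j} ≥ 0 for all i ≤ j. -/
open Matrix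

open Finset

section Aux
variable {n : ℕ} {B : Matrix (Fin n) (Fin n) ℤ}

lemma N_zero (h1 : ∀ i, B i i = 1) (h2 : ∀ i j : Fin n, j < i → B i j = 0)
    {i j : Fin n} (h : ¬ i < j) : (B - 1) i j = 0 := by
  rcases lt_trichotomy i j with hlt | rfl | hgt
  · exact absurd hlt h
  · simp [Matrix.sub_apply, h1]
  · have hne : i ≠ j := hgt.ne'
    simp [Matrix.sub_apply, Matrix.one_apply_ne hne, h2 _ _ hgt]

lemma N_eq (h1 : ∀ i, B i i = 1) {i j : Fin n} (h : i < j) : (B - 1) i j = B i j := by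
  simp [Matrix.sub_apply, Matrix.one_apply_ne (ne_of_lt h)]

lemma N_nonneg (h1 : ∀ i, B i i = 1) (h2 : ∀ i j : Fin n, j < i → B i j = 0)
    (h3 : ∀ i j : Fin n, i < j → 0 ≤ B i j) (i j : Fin n) : 0 ≤ (B - 1) i j := by
  rcases lt_or_ge i j with h | h
  · rw [N_eq h1 h]; exact h3 _ _ h
  · rw [N_zero h1 h2 (not_lt.mpr h)]

lemma Npow_nonneg (h1 : ∀ i, B i i = 1) (h2 : ∀ i j : Fin n, j < i → B i j = 0)
    (h3 : ∀ i j : Fin n, i < j → 0 ≤ B i j) (m : ℕ) (i j : Fin n) :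
    0 ≤ ((B - 1) ^ m) i j := by
  induction m generalizing i j with
  | zero =>
    rcases eq_or_ne i j with rfl | hh
    · simp
    · simp [Matrix.one_apply_ne hh]
  | succ m ih =>
    rw [pow_succ, Matrix.mul_apply]
    exact Finset.sum_nonneg fun k _ => mul_nonneg (ih i k) (N_nonneg h1 h2 h3 k j)

lemma Npow_bound (h1 : ∀ i, B i i = 1) (h2 : ∀ i j : Fin n, j < i → B i j = 0)
    (m : ℕ) (i j : Fin n) (h : ((B - 1) ^ m) i j ≠ 0) : (i : ℕ) + m ≤ (j : ℕ) := by
  induction m generalizing i j with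
  | zero =>
    simp only [pow_zero] at h
    have : i = j := by by_contra hne; exact h (Matrix.one_apply_ne hne)
    subst this; omega
  | succ m ih =>
    rw [pow_succ, Matrix.mul_apply] at h
    obtain ⟨k, _, hk⟩ := Finset.exists_ne_zero_of_sum_ne_zero h
    have h1' : ((B - 1) ^ m) i k ≠ 0 := fun hz => hk (by simp [hz])
    have h2' : (B - 1) k j ≠ 0 := fun hz => hk (by simp [hz])
    have hkj : k < j := by by_contra hc; exact h2' (N_zero h1 h2 hc)
    have := ih i k h1'
    have : (k : ℕ) < j := hkj
    omega

lemma Binv_formula (h1 : ∀ i, B i i = 1) (h2 : ∀ i j : Fin n, j < i → B i j = 0) :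
    B⁻¹ = ∑ m ∈ range n, ((-1 : ℤ) ^ m) • (B - 1) ^ m := by
  have hnil : (B - 1) ^ n = 0 := by
    ext i j
    by_contra h
    have := Npow_bound h1 h2 n i j h
    have : (j : ℕ) < n := j.isLt
    omega
  apply Matrix.inv_eq_right_inv
  have hB : B = 1 + (B - 1) := by rw [add_sub_cancel]
  calc B * ∑ m ∈ range n, ((-1 : ℤ) ^ m) • (B - 1) ^ m
      = ∑ m ∈ range n, (((-1:ℤ)^m) • (B-1)^m - ((-1:ℤ)^(m+1)) • (B-1)^(m+1)) := by
        rw [Finset.mul_sum]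
        refine Finset.sum_congr rfl fun m _ => ?_
        nth_rewrite 1 [hB]
        rw [add_mul, one_mul, mul_smul_comm, ← pow_succ']
        rw [pow_succ (-1:ℤ), mul_neg_one, neg_smul, sub_neg_eq_add]
    _ = 1 := by
        rw [Finset.sum_range_sub' (fun m => ((-1:ℤ)^m) • (B-1)^m)]
        simp [hnil]

lemma Binv_entry (h1 : ∀ i, B i i = 1) (h2 : ∀ i j : Fin n, j < i → B i j = 0)
    (i j : Fin n) : B⁻¹ i j = ∑ m ∈ range n, (-1 : ℤ) ^ m * ((B - 1) ^ m) i j := by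
  rw [Binv_formula h1 h2]
  simp only [Matrix.sum_apply, Matrix.smul_apply, smul_eq_mul]

lemma sup_spec (h1 : ∀ i, B i i = 1) (h2 : ∀ i j : Fin n, j < i → B i j = 0)
    {i j : Fin n} (hex : ∃ m, 1 ≤ m ∧ ((B-1)^m) i j ≠ 0) :
    (1 ≤ sSup {m : ℕ | 1 ≤ m ∧ ((B-1)^m) i j ≠ 0} ∧
     ((B-1)^(sSup {m : ℕ | 1 ≤ m ∧ ((B-1)^m) i j ≠ 0})) i j ≠ 0) ∧
     ∀ m, 1 ≤ m → ((B-1)^m) i j ≠ 0 →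
       m ≤ sSup {m : ℕ | 1 ≤ m ∧ ((B-1)^m) i j ≠ 0} := by
  have hbdd : BddAbove {m : ℕ | 1 ≤ m ∧ ((B-1)^m) i j ≠ 0} := by
    refine ⟨n, fun m hm => ?_⟩
    have := Npow_bound h1 h2 m i j hm.2
    have := j.isLt
    omega
  have hmem := Nat.sSup_mem hex hbdd
  exact ⟨⟨hmem.1, hmem.2⟩, fun m hm hne => le_csSup hbdd ⟨hm, hne⟩⟩

lemma parity_lemma (h1 : ∀ i, B i i = 1) (h2 : ∀ i j : Fin n, j < i → B i j = 0)
    (h3 : ∀ i j : Fin n, i < j → 0 ≤ B i j) {s : Fin n → ℤ}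
    (hs : ∀ i, s i = 1 ∨ s i = -1)
    (hedge : ∀ i j, GammaEdge B i j → s i * s j = -1) :
    ∀ L, ∀ i j : Fin n, 1 ≤ L → ((B-1)^L) i j ≠ 0 →
      (∀ m, 1 ≤ m → ((B-1)^m) i j ≠ 0 → m ≤ L) → s i * s j = (-1:ℤ)^L := by
  intro L
  induction L using Nat.strong_induction_on with
  | _ L IH =>
  intro i j hL hne hmax
  have hij : i < j := by
    have := Npow_bound h1 h2 L i j hne
    exact Fin.lt_def.mpr (by omega)
  rcases eq_or_lt_of_le hL with hL1 | hL2
  · -- L = 1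
    subst hL1
    have hNij : (B - 1) i j ≠ 0 := by rwa [pow_one] at hne
    have hBne : B i j ≠ 0 := by rwa [N_eq h1 hij] at hNij
    have hBij : 1 ≤ B i j := by
      have hnn := h3 i j hij
      omega
    have hedge' : GammaEdge B i j := by
      refine ⟨hij, hBij, fun m hm => ?_⟩
      by_contra h'
      have := hmax m (by omega) h'
      omega
    rw [hedge i j hedge']; norm_num
  · -- 2 ≤ L
    obtain ⟨l, rfl⟩ : ∃ l, L = l + 1 := ⟨L - 1, by omega⟩
    have hl1 : 1 ≤ l := by omega
    rw [pow_succ', Matrix.mul_apply] at hne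
    obtain ⟨k, _, hk⟩ := Finset.exists_ne_zero_of_sum_ne_zero hne
    have hik : (B - 1) i k ≠ 0 := fun hz => hk (by simp [hz])
    have hkj : ((B - 1) ^ l) k j ≠ 0 := fun hz => hk (by simp [hz])
    obtain ⟨⟨ha1, hane⟩, hamax⟩ := sup_spec h1 h2 ⟨1, le_refl 1, by rwa [pow_one]⟩
      (i := i) (j := k)
    obtain ⟨⟨hb1, hbne⟩, hbmax⟩ := sup_spec h1 h2 ⟨l, hl1, hkj⟩ (i := k) (j := j)
    set a := sSup {m : ℕ | 1 ≤ m ∧ ((B-1)^m) i k ≠ 0} with hadef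
    set b := sSup {m : ℕ | 1 ≤ m ∧ ((B-1)^m) k j ≠ 0} with hbdef
    have habne : ((B - 1) ^ (a + b)) i j ≠ 0 := by
      rw [pow_add, Matrix.mul_apply]
      have hterm : 0 < ((B-1)^a) i k * ((B-1)^b) k j :=
        mul_pos (lt_of_le_of_ne (Npow_nonneg h1 h2 h3 a i k) (Ne.symm hane))
          (lt_of_le_of_ne (Npow_nonneg h1 h2 h3 b k j) (Ne.symm hbne))
      have hle : ((B-1)^a) i k * ((B-1)^b) k j ≤
          ∑ x, ((B-1)^a) i x * ((B-1)^b) x j :=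
        Finset.single_le_sum (fun x _ => mul_nonneg (Npow_nonneg h1 h2 h3 a i x)
          (Npow_nonneg h1 h2 h3 b x j)) (Finset.mem_univ k)
      exact ne_of_gt (lt_of_lt_of_le hterm hle)
    have hble : l ≤ b := hbmax l hl1 hkj
    have hab : a + b = l + 1 := by
      have h' := hmax (a + b) (by omega) habne
      omega
    have hia := IH a (by omega) i k ha1 hane (fun m hm h' => hamax m hm h')
    have hib := IH b (by omega) k j hb1 hbne (fun m hm h' => hbmax m hm h')
    have hsk : s k * s k = 1 := by rcases hs k with h | h <;> rw [h] <;> norm_num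
    calc s i * s j = (s i * s k) * (s k * s j) := by
          rw [show (s i * s k) * (s k * s j) = s i * (s k * s k) * s j by ring, hsk]
          ring
      _ = (-1:ℤ)^a * (-1:ℤ)^b := by rw [hia, hib]
      _ = (-1:ℤ)^(l+1) := by rw [← pow_add, hab]
end Aux

section Entries
variable {n : ℕ} {B : Matrix (Fin n) (Fin n) ℤ}

lemma Binv_diag (hn : 1 ≤ n) (h1 : ∀ i, B i i = 1)
    (h2 : ∀ i j : Fin n, j < i → B i j = 0) (i : Fin n) : B⁻¹ i i = 1 := by
  rw [Binv_entry h1 h2]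
  rw [Finset.sum_eq_single_of_mem 0 (Finset.mem_range.mpr hn)]
  · simp
  · intro m _ hm0
    have : ((B - 1) ^ m) i i = 0 := by
      by_contra h'
      have := Npow_bound h1 h2 m i i h'
      omega
    simp [this]

lemma Binv_low (h1 : ∀ i, B i i = 1) (h2 : ∀ i j : Fin n, j < i → B i j = 0)
    {i j : Fin n} (hij : j < i) : B⁻¹ i j = 0 := by
  rw [Binv_entry h1 h2]
  refine Finset.sum_eq_zero fun m _ => ?_
  have : ((B - 1) ^ m) i j = 0 := by
    by_contra h'
    have := Npow_bound h1 h2 m i j h'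
    have : (j : ℕ) < i := hij
    omega
  simp [this]

lemma Binv_nopath (h1 : ∀ i, B i i = 1) (h2 : ∀ i j : Fin n, j < i → B i j = 0)
    {i j : Fin n} (hij : i ≠ j) (hz : ∀ m : ℕ, 1 ≤ m → ((B - 1) ^ m) i j = 0) :
    B⁻¹ i j = 0 := by
  rw [Binv_entry h1 h2]
  refine Finset.sum_eq_zero fun m _ => ?_
  rcases Nat.eq_zero_or_pos m with rfl | hm
  · simp [Matrix.one_apply_ne hij]
  · simp [hz m hm]

lemma Binv_edge (h1 : ∀ i, B i i = 1) (h2 : ∀ i j : Fin n, j < i → B i j = 0)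
    {i j : Fin n} (he : GammaEdge B i j) : B⁻¹ i j = -B i j := by
  obtain ⟨hij, hB, hm⟩ := he
  have h1n : 1 < n := by
    have h1j : (1 : ℕ) ≤ (j : ℕ) := by
      have : (i : ℕ) < j := hij
      omega
    have := j.isLt
    omega
  rw [Binv_entry h1 h2]
  rw [Finset.sum_eq_single_of_mem 1 (Finset.mem_range.mpr h1n)]
  · rw [pow_one, pow_one, N_eq h1 hij]; ring
  · intro m _ hm1
    rcases Nat.eq_zero_or_pos m with rfl | hm0
    · simp [Matrix.one_apply_ne (ne_of_lt hij)]
    · have : 2 ≤ m := by omega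
      simp [hm m this]
end Entries


/-- Suppose `Γ_D` is bipartite.  Then `B` is signable iff
`⟨i,j⟩ * (B⁻¹) i j ≥ 0` for all `i ≤ j`. -/
theorem stmt5 {n : ℕ} (hn : 1 ≤ n) (B : Matrix (Fin n) (Fin n) ℤ)
    (h1 : ∀ i, B i i = 1) (h2 : ∀ i j : Fin n, j < i → B i j = 0)
    (h3 : ∀ i j : Fin n, i < j → 0 ≤ B i j)
    (hbip : GammaBipartite B) :
    IsSignable B⁻¹ ↔ ∀ i j : Fin n, i ≤ j → 0 ≤ pairing B i j * B⁻¹ i j := by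
  constructor
  · rintro ⟨s, hs, hsign⟩ i j hij
    have hedge : ∀ i j, GammaEdge B i j → s i * s j = -1 := by
      intro i j he
      have h0 : B⁻¹ i j = -B i j := Binv_edge h1 h2 he
      have hBij : 1 ≤ B i j := he.2.1
      have hsig := hsign i j
      have habs : |(-B i j)| = B i j := by
        rw [abs_neg]; exact abs_of_nonneg (by linarith)
      rw [h0, habs] at hsig
      rcases hs i with hi | hi <;> rcases hs j with hj | hj <;>
        rw [hi, hj] at hsig ⊢ <;> linarith
    rcases eq_or_lt_of_le hij with rfl | hlt
    · rw [Binv_diag hn h1 h2]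
      simp [pairing]
    · have hne : i ≠ j := ne_of_lt hlt
      by_cases hex : ∃ m : ℕ, 1 ≤ m ∧ ((B - 1) ^ m) i j ≠ 0
      · obtain ⟨⟨hL1, hLne⟩, hLmax⟩ := sup_spec h1 h2 hex
        set L := sSup {m : ℕ | 1 ≤ m ∧ ((B-1)^m) i j ≠ 0} with hLdef
        have hpar : s i * s j = (-1:ℤ)^L :=
          parity_lemma h1 h2 h3 hs hedge L i j hL1 hLne hLmax
        have hpairing : pairing B i j = (-1:ℤ)^L := by
          rw [pairing, if_neg hne, if_pos hex]
        rw [hpairing]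
        have hkey : (-1:ℤ)^L * B⁻¹ i j = |B⁻¹ i j| := by
          rw [← hpar, ← hsign i j]; ring
        rw [hkey]
        exact abs_nonneg _
      · have hpairing : pairing B i j = 0 := by
          rw [pairing, if_neg hne, if_neg hex]
        rw [hpairing, zero_mul]
  · intro h
    obtain ⟨c, hc⟩ := hbip
    refine ⟨fun i => if c i then 1 else -1, fun i => by dsimp; split <;> simp, ?_⟩
    set s : Fin n → ℤ := fun i => if c i then 1 else -1 with hsdef
    have hs : ∀ i, s i = 1 ∨ s i = -1 := fun i => by
      rw [hsdef]; dsimp; split <;> simp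
    have hedge : ∀ i j, GammaEdge B i j → s i * s j = -1 := by
      intro i j he
      have := hc i j he
      rw [hsdef]; dsimp
      cases hci : c i <;> cases hcj : c j <;> simp_all
    intro i j
    rcases lt_trichotomy i j with hlt | rfl | hgt
    · by_cases hex : ∃ m : ℕ, 1 ≤ m ∧ ((B - 1) ^ m) i j ≠ 0
      · obtain ⟨⟨hL1, hLne⟩, hLmax⟩ := sup_spec h1 h2 hex
        set L := sSup {m : ℕ | 1 ≤ m ∧ ((B-1)^m) i j ≠ 0} with hLdef
        have hpar : s i * s j = (-1:ℤ)^L :=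
          parity_lemma h1 h2 h3 hs hedge L i j hL1 hLne hLmax
        have hpairing : pairing B i j = (-1:ℤ)^L := by
          rw [pairing, if_neg (ne_of_lt hlt), if_pos hex]
        have hpos : 0 ≤ (-1:ℤ)^L * B⁻¹ i j := by
          have := h i j (le_of_lt hlt)
          rwa [hpairing] at this
        have habs1 : |(-1:ℤ)^L| = 1 := by
          rw [abs_pow, abs_neg, abs_one, one_pow]
        calc s i * B⁻¹ i j * s j = (s i * s j) * B⁻¹ i j := by ring
          _ = (-1:ℤ)^L * B⁻¹ i j := by rw [hpar]
          _ = |(-1:ℤ)^L * B⁻¹ i j| := (abs_of_nonneg hpos).symm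
          _ = |B⁻¹ i j| := by rw [abs_mul, habs1, one_mul]
      · push_neg at hex
        have h0 : B⁻¹ i j = 0 :=
          Binv_nopath h1 h2 (ne_of_lt hlt) fun m hm => by
            by_contra h'
            exact absurd (hex m hm) (by simp [h'])
        simp [h0]
    · rw [Binv_diag hn h1 h2]
      rcases hs i with hi | hi <;> rw [hi] <;> norm_num
    · rw [Binv_low h1 h2 hgt]
      simp
end

section
/- Suppose B_{i,j} ≤ 1 for all i < j (D is a simple digraph), B is signable, and D⁺ is bipartite. Then |(B⁻¹)_{i,j}| ≤ 1 for all i < j (i.e., D is simply invertible). -/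
open Matrix

/-- If `D` is a simple digraph (`B i j ≤ 1` off the diagonal), `B` is
signable, and the parity closure `D⁺` is bipartite, then `|(B⁻¹) i j| ≤ 1` for all
`i < j` (`D` is simply invertible). -/
theorem stmt7 {n : ℕ} (hn : 1 ≤ n) (B : Matrix (Fin n) (Fin n) ℤ)
    (h1 : ∀ i, B i i = 1) (h2 : ∀ i j : Fin n, j < i → B i j = 0)
    (h3 : ∀ i j : Fin n, i < j → 0 ≤ B i j)
    (hsimple : ∀ i j : Fin n, i < j → B i j ≤ 1)
    (hsig : IsSignable B⁻¹)
    (hplus : ∃ c : Fin n → Bool, ∀ i j : Fin n, i < j → B⁻¹ i j ≠ 0 → c i ≠ c j) :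
    ∀ i j : Fin n, i < j → |B⁻¹ i j| ≤ 1 := by
  classical
  obtain ⟨s, hs1, hs2⟩ := hsig
  obtain ⟨c, hc⟩ := hplus
  set C : Matrix (Fin n) (Fin n) ℤ := B⁻¹ with hCdef
  -- B is upper triangular with determinant 1
  have hBt : B.BlockTriangular id := fun i j h => h2 i j h
  have hdet : B.det = 1 := by
    rw [Matrix.det_of_upperTriangular hBt]; simp [h1]
  have hunit : IsUnit B.det := by rw [hdet]; exact isUnit_one
  haveI : Invertible B := B.invertibleOfIsUnitDet hunit
  have hCB : C * B = 1 := Matrix.nonsing_inv_mul B hunit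
  have hBC : B * C = 1 := Matrix.mul_nonsing_inv B hunit
  -- C is upper triangular
  have hCt : ∀ i j : Fin n, j < i → C i j = 0 := fun i j h =>
    Matrix.blockTriangular_inv_of_blockTriangular hBt h
  -- diagonal of C is 1
  have hCdiag : ∀ i, C i i = 1 := by
    intro i
    have h := congrArg (fun M => M i i) hCB
    simp only [Matrix.mul_apply, Matrix.one_apply_eq] at h
    rw [Finset.sum_eq_single i] at h
    · rwa [h1 i, mul_one] at h
    · intro k _ hk
      rcases lt_or_gt_of_ne hk with hlt | hlt
      · rw [hCt i k hlt, zero_mul]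
      · rw [h2 k i hlt, mul_zero]
    · intro h'; exact absurd (Finset.mem_univ i) h'
  -- the combined sign vector
  set t : Fin n → ℤ := fun i => (if c i then 1 else -1) * s i with htdef
  have ht2 : ∀ i, t i * t i = 1 := by
    intro i
    rcases hs1 i with h | h <;> cases hci : c i <;> simp [htdef, h, hci]
  -- the nonnegative nilpotent matrix N
  set N : Matrix (Fin n) (Fin n) ℤ :=
    Matrix.of (fun i j => if i < j then |C i j| else 0) with hNdef
  have hNij : ∀ i j : Fin n, i < j → N i j = |C i j| := by
    intro i j h; simp [hNdef, h]
  have hNnn : ∀ i j : Fin n, 0 ≤ N i j := by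
    intro i j
    by_cases h : i < j <;> simp [hNdef, h, abs_nonneg]
  -- conjugation of C equals 1 - N
  have hM : ∀ i j : Fin n, t i * C i j * t j = (1 - N) i j := by
    intro i j
    rcases lt_trichotomy i j with h | h | h
    · have hne : i ≠ j := ne_of_lt h
      have key : t i * C i j * t j = -|C i j| := by
        have hsij : s i * C i j * s j = |C i j| := hs2 i j
        by_cases hz : C i j = 0
        · simp [hz]
        · have hcij : c i ≠ c j := hc i j h hz
          have : (if c i then (1:ℤ) else -1) * (if c j then (1:ℤ) else -1) = -1 := by
            cases hci : c i <;> cases hcj : c j <;> simp_all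
          calc t i * C i j * t j
              = ((if c i then (1:ℤ) else -1) * (if c j then (1:ℤ) else -1)) *
                (s i * C i j * s j) := by rw [htdef]; ring
            _ = -1 * |C i j| := by rw [this, hsij]
            _ = -|C i j| := by ring
      rw [key]
      simp [Matrix.sub_apply, Matrix.one_apply_ne hne, hNij i j h]
    · subst h
      rw [hCdiag i]
      have : t i * 1 * t i = 1 := by rw [mul_one]; exact ht2 i
      rw [this]
      simp [Matrix.sub_apply, hNdef]
    · rw [hCt i j h]
      have hne : i ≠ j := ne_of_gt h
      have : ¬ i < j := not_lt.mpr (le_of_lt h)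
      simp [Matrix.sub_apply, Matrix.one_apply_ne hne, hNdef, this]
  -- conjugated matrices
  set M : Matrix (Fin n) (Fin n) ℤ := Matrix.of (fun i j => t i * C i j * t j) with hMdef
  set B' : Matrix (Fin n) (Fin n) ℤ := Matrix.of (fun i j => t i * B i j * t j) with hB'def
  have hMN : M = 1 - N := by
    ext i j; exact hM i j
  have hB'M : B' * M = 1 := by
    ext i j
    have : ∀ k, B' i k * M k j = t i * t j * (B i k * C k j) := by
      intro k
      have hk := ht2 k
      simp only [hB'def, hMdef, Matrix.of_apply]
      calc t i * B i k * t k * (t k * C k j * t j)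
          = (t k * t k) * (t i * t j * (B i k * C k j)) := by ring
        _ = t i * t j * (B i k * C k j) := by rw [hk]; ring
    simp only [Matrix.mul_apply, this, ← Finset.mul_sum]
    have : ∑ k, B i k * C k j = (1 : Matrix (Fin n) (Fin n) ℤ) i j := by
      rw [← hBC]; simp [Matrix.mul_apply]
    rw [this]
    by_cases h : i = j
    · subst h; simp [Matrix.one_apply_eq, ht2 i]
    · simp [Matrix.one_apply_ne h]
  -- powers of N vanish far enough and are nonnegative
  have hNpow0 : ∀ m : ℕ, ∀ i j : Fin n, (j : ℕ) < (i : ℕ) + m → (N ^ m) i j = 0 := by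
    intro m
    induction m with
    | zero =>
      intro i j h
      have hne : i ≠ j := by
        intro he; subst he; exact lt_irrefl _ h
      simp [Matrix.one_apply_ne hne]
    | succ m ih =>
      intro i j h
      rw [pow_succ', Matrix.mul_apply]
      apply Finset.sum_eq_zero
      intro k _
      by_cases hik : i < k
      · have : (j : ℕ) < (k : ℕ) + m := by
          have : (i : ℕ) + 1 ≤ (k : ℕ) := hik
          omega
        rw [ih k j this, mul_zero]
      · have : N i k = 0 := by simp [hNdef, hik]
        rw [this, zero_mul]
  have hNn : N ^ n = 0 := by
    ext i j
    have : (j : ℕ) < (i : ℕ) + n := lt_of_lt_of_le j.isLt (Nat.le_add_left n i)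
    simp [hNpow0 n i j this]
  have hNpownn : ∀ m : ℕ, ∀ i j : Fin n, 0 ≤ (N ^ m) i j := by
    intro m
    induction m with
    | zero =>
      intro i j
      by_cases h : i = j
      · subst h; simp
      · simp [Matrix.one_apply_ne h]
    | succ m ih =>
      intro i j
      rw [pow_succ', Matrix.mul_apply]
      exact Finset.sum_nonneg fun k _ => mul_nonneg (hNnn i k) (ih k j)
  -- geometric series
  have hgeo : ∀ k : ℕ, (1 - N) * (∑ m ∈ Finset.range k, N ^ m) = 1 - N ^ k := by
    intro k
    induction k with
    | zero => simp
    | succ k ih =>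
      rw [Finset.sum_range_succ, mul_add, ih, pow_succ']
      noncomm_ring
  set T : Matrix (Fin n) (Fin n) ℤ := ∑ m ∈ Finset.range n, N ^ m with hTdef
  have hMT : M * T = 1 := by
    rw [hMN, hTdef, hgeo n, hNn, sub_zero]
  have hB'T : B' = T := by
    calc B' = B' * 1 := by rw [Matrix.mul_one]
      _ = B' * (M * T) := by rw [hMT]
      _ = (B' * M) * T := by rw [Matrix.mul_assoc]
      _ = 1 * T := by rw [hB'M]
      _ = T := Matrix.one_mul T
  -- conclude
  intro i j hij
  have h1n : 1 < n := by
    have : (i : ℕ) < (j : ℕ) := hij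
    have := j.isLt
    omega
  have hsum : N i j ≤ T i j := by
    have : (N ^ 1) i j ≤ ∑ m ∈ Finset.range n, (N ^ m) i j :=
      Finset.single_le_sum (f := fun m => (N ^ m) i j)
        (fun m _ => hNpownn m i j) (Finset.mem_range.mpr h1n)
    rw [pow_one] at this
    calc N i j ≤ ∑ m ∈ Finset.range n, (N ^ m) i j := this
      _ = T i j := by simp [hTdef, Matrix.sum_apply]
  have hB'ij : B' i j ≤ 1 := by
    have ht1 : |t i| = 1 := by
      rcases hs1 i with h | h <;> cases hci : c i <;> simp [htdef, h, hci]
    have ht1' : |t j| = 1 := by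
      rcases hs1 j with h | h <;> cases hcj : c j <;> simp [htdef, h, hcj]
    have : B' i j ≤ |B' i j| := le_abs_self _
    have habs : |B' i j| = |B i j| := by
      simp only [hB'def, Matrix.of_apply, abs_mul, ht1, ht1', one_mul, mul_one]
    have hb : |B i j| = B i j := abs_of_nonneg (h3 i j hij)
    calc B' i j ≤ |B' i j| := le_abs_self _
      _ = |B i j| := habs
      _ = B i j := hb
      _ ≤ 1 := hsimple i j hij
  calc |C i j| = N i j := (hNij i j hij).symm
    _ ≤ T i j := hsum
    _ = B' i j := by rw [hB'T]
    _ ≤ 1 := hB'ij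
end

section
/- For all vertices i < k < j, one has (B⁻¹)_{i,j} = (B⁻¹)_{i,k}·(B⁻¹)_{k,j} + ((B⁽ᵏ⁾)⁻¹)_{i,j}. -/
open Matrix

/-- For all vertices `i < k < j`,
`(B⁻¹) i j = (B⁻¹) i k * (B⁻¹) k j + ((B⁽ᵏ⁾)⁻¹) i j`. -/
theorem stmt10 {n : ℕ} (hn : 1 ≤ n) (B : Matrix (Fin n) (Fin n) ℤ)
    (h1 : ∀ i, B i i = 1) (h2 : ∀ i j : Fin n, j < i → B i j = 0)
    (h3 : ∀ i j : Fin n, i < j → 0 ≤ B i j)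
    (i k j : Fin n) (hik : i < k) (hkj : k < j) :
    B⁻¹ i j = B⁻¹ i k * B⁻¹ k j + (vertexDelete B k)⁻¹ i j := by
  classical
  set B' := vertexDelete B k with hB'
  have hij : i < j := hik.trans hkj
  have hikne : i ≠ k := ne_of_lt hik
  have hkjne : k ≠ j := ne_of_lt hkj
  -- triangularity
  have htB : B.BlockTriangular id := fun a b h => h2 a b h
  have htB' : B'.BlockTriangular id := by
    intro a b h
    simp only [hB', vertexDelete, Matrix.of_apply]
    split
    · rfl
    · exact h2 a b h
  -- determinants
  have hdB : B.det = 1 := by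
    rw [Matrix.det_of_upperTriangular htB]
    simp [h1]
  have hdB' : B'.det = 1 := by
    rw [Matrix.det_of_upperTriangular htB']
    have : ∀ a : Fin n, B' a a = 1 := by
      intro a
      simp [hB', vertexDelete, h1]
    simp [this]
  have huB : IsUnit B.det := by rw [hdB]; exact isUnit_one
  have huB' : IsUnit B'.det := by rw [hdB']; exact isUnit_one
  have hBB : B * B⁻¹ = 1 := Matrix.mul_nonsing_inv B huB
  have hBB2 : B⁻¹ * B = 1 := Matrix.nonsing_inv_mul B huB
  have hB'B' : B' * B'⁻¹ = 1 := Matrix.mul_nonsing_inv B' huB'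
  -- row k of B' is the k-th standard basis row
  have hB'row : ∀ l : Fin n, B' k l = if k = l then 1 else 0 := by
    intro l
    by_cases h : k = l
    · subst h; simp [hB', vertexDelete, h1]
    · simp [hB', vertexDelete, h, Ne.symm h]
  -- row k of B'⁻¹
  have hB'invrow : ∀ l : Fin n, B'⁻¹ k l = if k = l then 1 else 0 := by
    intro l
    have := congrFun (congrFun hB'B' k) l
    rw [Matrix.mul_apply] at this
    rw [Finset.sum_eq_single k (fun b _ hb => by rw [hB'row b, if_neg (Ne.symm hb), zero_mul])
      (fun h => absurd (Finset.mem_univ k) h)] at this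
    rw [hB'row k, if_pos rfl, one_mul] at this
    rw [this, Matrix.one_apply]
  have hB'invkj : B'⁻¹ k j = 0 := by rw [hB'invrow j, if_neg hkjne]
  -- B⁻¹ is block triangular, so its (k,k) entry is 1
  haveI : Invertible B := B.invertibleOfIsUnitDet huB
  have htBinv : B⁻¹.BlockTriangular id := Matrix.blockTriangular_inv_of_blockTriangular htB
  have hBinvkk : B⁻¹ k k = 1 := by
    have := congrFun (congrFun hBB k) k
    rw [Matrix.mul_apply] at this
    rw [Finset.sum_eq_single k (fun b _ hb => by
      rcases lt_or_gt_of_ne hb with h | h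
      · rw [h2 k b h, zero_mul]
      · rw [htBinv h, mul_zero])
      (fun h => absurd (Finset.mem_univ k) h)] at this
    rw [h1 k, one_mul] at this
    rw [this, Matrix.one_apply_eq]
  -- the key matrix identity
  have key : B'⁻¹ - B⁻¹ = B⁻¹ * ((B - B') * B'⁻¹) := by
    rw [sub_mul, hB'B', mul_sub, ← mul_assoc, hBB2, one_mul, mul_one]
  -- entries of B - B'
  have hdiff : ∀ a b : Fin n, (B - B') a b = if a ≠ b ∧ (a = k ∨ b = k) then B a b else 0 := by
    intro a b
    simp only [Matrix.sub_apply, hB', vertexDelete, Matrix.of_apply]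
    split
    · rw [sub_zero]
    · rw [sub_self]
  -- ((B - B') * B'⁻¹) l j = 0 for l ≠ k
  have hcol : ∀ l : Fin n, l ≠ k → ((B - B') * B'⁻¹) l j = 0 := by
    intro l hl
    rw [Matrix.mul_apply]
    apply Finset.sum_eq_zero
    intro m _
    by_cases hm : m = k
    · subst hm; rw [hB'invkj, mul_zero]
    · rw [hdiff l m]
      have : ¬(l ≠ m ∧ (l = k ∨ m = k)) := by
        rintro ⟨-, h | h⟩
        exacts [hl h, hm h]
      rw [if_neg this, zero_mul]
  -- ((B - B') * B'⁻¹) k j = (B * B'⁻¹) k j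
  have hkcol : ((B - B') * B'⁻¹) k j = (B * B'⁻¹) k j := by
    rw [sub_mul, hB'B', Matrix.sub_apply, Matrix.one_apply, if_neg hkjne, sub_zero]
  -- entrywise evaluation of `key` at any row a, column j
  have E : ∀ a : Fin n, B'⁻¹ a j - B⁻¹ a j = B⁻¹ a k * (B * B'⁻¹) k j := by
    intro a
    have := congrFun (congrFun key a) j
    rw [Matrix.sub_apply] at this
    rw [this, Matrix.mul_apply]
    rw [Finset.sum_eq_single k (fun b _ hb => by rw [hcol b hb, mul_zero])
      (fun h => absurd (Finset.mem_univ k) h), hkcol]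
  have Ek := E k
  rw [hB'invkj, hBinvkk, one_mul, zero_sub] at Ek
  have Ei := E i
  rw [← Ek] at Ei
  linarith [Ei]
end

section
/- B is signable if and only if Γ_D is bipartite and every prime pair (i,j) of D is signable. -/
open Matrix Finset

open Matrix

namespace Stmt11Aux

variable {n : ℕ}

section Stubs

lemma N_zero (B : Matrix (Fin n) (Fin n) ℤ) (h1 : ∀ i, B i i = 1)
    (h2 : ∀ i j : Fin n, j < i → B i j = 0) {i j : Fin n} (h : ¬ i < j) :
    (B - 1) i j = 0 := by
  rcases eq_or_ne i j with rfl | hne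
  · simp [Matrix.sub_apply, Matrix.one_apply, h1 i]
  · have hji : j < i := by
      rcases lt_trichotomy i j with h' | h' | h' <;> first | exact absurd h' h | exact absurd h' hne | exact h'
    simp [Matrix.sub_apply, Matrix.one_apply, hne, h2 i j hji]

lemma N_eq (B : Matrix (Fin n) (Fin n) ℤ) {i j : Fin n} (h : i ≠ j) :
    (B - 1) i j = B i j := by
  simp [Matrix.sub_apply, Matrix.one_apply, h]

lemma N_nonneg (B : Matrix (Fin n) (Fin n) ℤ) (h1 : ∀ i, B i i = 1)
    (h2 : ∀ i j : Fin n, j < i → B i j = 0) (h3 : ∀ i j : Fin n, i < j → 0 ≤ B i j)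
    (i j : Fin n) : 0 ≤ (B - 1) i j := by
  by_cases h : i < j
  · rw [N_eq B (ne_of_lt h)]; exact h3 i j h
  · rw [N_zero B h1 h2 h]

lemma pow_nonneg' (B : Matrix (Fin n) (Fin n) ℤ) (h1 : ∀ i, B i i = 1)
    (h2 : ∀ i j : Fin n, j < i → B i j = 0) (h3 : ∀ i j : Fin n, i < j → 0 ≤ B i j)
    (m : ℕ) (i j : Fin n) : 0 ≤ ((B - 1) ^ m) i j := by
  induction m generalizing i j with
  | zero => simp [Matrix.one_apply]; split <;> norm_num
  | succ m ih =>
      rw [pow_succ, Matrix.mul_apply]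
      exact Finset.sum_nonneg fun k _ => mul_nonneg (ih i k) (N_nonneg B h1 h2 h3 k j)

lemma pow_support (B : Matrix (Fin n) (Fin n) ℤ) (h1 : ∀ i, B i i = 1)
    (h2 : ∀ i j : Fin n, j < i → B i j = 0) {m : ℕ} {i j : Fin n}
    (h : ((B - 1) ^ m) i j ≠ 0) : (i : ℕ) + m ≤ (j : ℕ) := by
  induction m generalizing j with
  | zero =>
      rw [pow_zero] at h
      have : i = j := by
        by_contra hne; exact h (Matrix.one_apply_ne hne)
      subst this; omega
  | succ m ih =>
      rw [pow_succ, Matrix.mul_apply] at h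
      obtain ⟨k, -, hk⟩ := Finset.exists_ne_zero_of_sum_ne_zero h
      have hk1 : ((B - 1) ^ m) i k ≠ 0 := left_ne_zero_of_mul hk
      have hk2 : (B - 1) k j ≠ 0 := right_ne_zero_of_mul hk
      have h1' := ih hk1
      have h2' : k < j := by
        by_contra hc; exact hk2 (N_zero B h1 h2 hc)
      have := (Fin.lt_def).1 h2'
      omega


lemma pow_n_eq_zero (B : Matrix (Fin n) (Fin n) ℤ) (h1 : ∀ i, B i i = 1)
    (h2 : ∀ i j : Fin n, j < i → B i j = 0) : (B - 1) ^ n = 0 := by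
  ext i j
  simp only [Matrix.zero_apply]
  by_contra h
  have := pow_support B h1 h2 h
  have := j.isLt
  omega

lemma inv_eq_sum (B : Matrix (Fin n) (Fin n) ℤ) (h1 : ∀ i, B i i = 1)
    (h2 : ∀ i j : Fin n, j < i → B i j = 0) :
    B⁻¹ = ∑ m ∈ Finset.range n, (-(B - 1)) ^ m := by
  apply Matrix.inv_eq_right_inv
  have hB : B = 1 - (-(B - 1)) := by rw [neg_sub, sub_sub_cancel]
  calc B * ∑ m ∈ Finset.range n, (-(B - 1)) ^ m
      = (1 - (-(B - 1))) * ∑ m ∈ Finset.range n, (-(B - 1)) ^ m := by rw [← hB]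
    _ = 1 - (-(B - 1)) ^ n := mul_neg_geom_sum _ _
    _ = 1 := by
        rw [neg_pow, pow_n_eq_zero B h1 h2]
        simp

lemma inv_apply (B : Matrix (Fin n) (Fin n) ℤ) (h1 : ∀ i, B i i = 1)
    (h2 : ∀ i j : Fin n, j < i → B i j = 0) (i j : Fin n) :
    B⁻¹ i j = ∑ m ∈ Finset.range n, (-1 : ℤ) ^ m * ((B - 1) ^ m) i j := by
  rw [inv_eq_sum B h1 h2, Matrix.sum_apply]
  refine Finset.sum_congr rfl fun m _ => ?_
  have : (-(B - 1)) ^ m = ((-1 : ℤ) ^ m) • (B - 1) ^ m := by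
    rw [← neg_one_smul ℤ (B - 1), smul_pow]
  rw [this, Matrix.smul_apply, smul_eq_mul]

lemma inv_diag (B : Matrix (Fin n) (Fin n) ℤ) (h1 : ∀ i, B i i = 1)
    (h2 : ∀ i j : Fin n, j < i → B i j = 0) (hn : 1 ≤ n) (i : Fin n) :
    B⁻¹ i i = 1 := by
  rw [inv_apply B h1 h2]
  rw [Finset.sum_eq_single_of_mem 0 (Finset.mem_range.2 (by omega))]
  · simp [Matrix.one_apply]
  · intro m _ hm
    have : ((B - 1) ^ m) i i = 0 := by
      by_contra h
      have := pow_support B h1 h2 h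
      omega
    rw [this, mul_zero]

lemma inv_lower (B : Matrix (Fin n) (Fin n) ℤ) (h1 : ∀ i, B i i = 1)
    (h2 : ∀ i j : Fin n, j < i → B i j = 0) {i j : Fin n} (hji : j < i) :
    B⁻¹ i j = 0 := by
  rw [inv_apply B h1 h2]
  refine Finset.sum_eq_zero fun m _ => ?_
  have : ((B - 1) ^ m) i j = 0 := by
    by_contra h
    have := pow_support B h1 h2 h
    have := (Fin.lt_def).1 hji
    omega
  rw [this, mul_zero]

lemma inv_upper (B : Matrix (Fin n) (Fin n) ℤ) (h1 : ∀ i, B i i = 1)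
    (h2 : ∀ i j : Fin n, j < i → B i j = 0) {i j : Fin n} (hij : i ≠ j) :
    B⁻¹ i j = ∑ m ∈ Finset.Ico 1 n, (-1 : ℤ) ^ m * ((B - 1) ^ m) i j := by
  rw [inv_apply B h1 h2]
  rcases Nat.eq_zero_or_pos n with rfl | hn
  · exact (Nat.not_lt_zero _ i.isLt).elim
  · rw [Finset.range_eq_Ico, Finset.sum_eq_sum_Ico_succ_bot hn]
    simp [Matrix.one_apply_ne hij]

lemma single_le_pow (B : Matrix (Fin n) (Fin n) ℤ) (h1 : ∀ i, B i i = 1)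
    (h2 : ∀ i j : Fin n, j < i → B i j = 0) (h3 : ∀ i j : Fin n, i < j → 0 ≤ B i j)
    (a b : ℕ) (i v j : Fin n) :
    ((B - 1) ^ a) i v * ((B - 1) ^ b) v j ≤ ((B - 1) ^ (a + b)) i j := by
  rw [pow_add, Matrix.mul_apply]
  refine Finset.single_le_sum (f := fun k => ((B - 1) ^ a) i k * ((B - 1) ^ b) k j)
    (fun k _ => mul_nonneg (pow_nonneg' B h1 h2 h3 a i k) (pow_nonneg' B h1 h2 h3 b k j)) (Finset.mem_univ v)


end Stubs

section SSup
variable (B : Matrix (Fin n) (Fin n) ℤ)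

/-- the set of path lengths -/
def PS (i j : Fin n) : Set ℕ := {m : ℕ | 1 ≤ m ∧ ((B - 1) ^ m) i j ≠ 0}

lemma PS_bdd (h1 : ∀ i, B i i = 1) (h2 : ∀ i j : Fin n, j < i → B i j = 0)
    (i j : Fin n) : BddAbove (PS B i j) := by
  refine ⟨n, fun m hm => ?_⟩
  have := pow_support B h1 h2 hm.2
  have := j.isLt
  omega

lemma not_zeroPair_iff (i j : Fin n) :
    ¬ZeroPair B i j ↔ ∃ m, 1 ≤ m ∧ ((B - 1) ^ m) i j ≠ 0 := by
  unfold ZeroPair; push_neg; rfl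

lemma sSup_PS_mem (h1 : ∀ i, B i i = 1) (h2 : ∀ i j : Fin n, j < i → B i j = 0) {i j : Fin n} (hz : ¬ZeroPair B i j) :
    1 ≤ sSup (PS B i j) ∧ ((B - 1) ^ (sSup (PS B i j))) i j ≠ 0 :=
  Nat.sSup_mem ((not_zeroPair_iff B i j).1 hz) (PS_bdd B h1 h2 i j)

lemma le_sSup_PS (h1 : ∀ i, B i i = 1) (h2 : ∀ i j : Fin n, j < i → B i j = 0) {i j : Fin n} {m : ℕ} (hm : m ∈ PS B i j) :
    m ≤ sSup (PS B i j) :=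
  le_csSup (PS_bdd B h1 h2 i j) hm

lemma pairing_eq {i j : Fin n} (hij : i ≠ j) (hz : ¬ZeroPair B i j) :
    pairing B i j = (-1 : ℤ) ^ (sSup (PS B i j)) := by
  rw [pairing, if_neg hij, if_pos ((not_zeroPair_iff B i j).1 hz)]
  rfl

lemma pairing_pm {i j : Fin n} (hij : i ≠ j) (hz : ¬ZeroPair B i j) :
    pairing B i j = 1 ∨ pairing B i j = -1 := by
  rw [pairing_eq B hij hz]
  rcases Nat.even_or_odd (sSup (PS B i j)) with h | h
  · exact Or.inl h.neg_one_pow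
  · exact Or.inr h.neg_one_pow

end SSup

section Sign
variable (B : Matrix (Fin n) (Fin n) ℤ)

lemma sign_pow (h1 : ∀ i, B i i = 1) (h2 : ∀ i j : Fin n, j < i → B i j = 0)
    (h3 : ∀ i j : Fin n, i < j → 0 ≤ B i j) (t : Fin n → ℤ)
    (ht : ∀ i, t i = 1 ∨ t i = -1)
    (hedge : ∀ i j, GammaEdge B i j → t i * t j = -1) :
    ∀ m, 1 ≤ m → ∀ i j : Fin n, ((B - 1) ^ m) i j ≠ 0 → m = sSup (PS B i j) →
      t i * t j = (-1 : ℤ) ^ m := by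
  intro m
  induction m using Nat.strong_induction_on with
  | _ m IH =>
    intro hm1 i j hne hsup
    rcases eq_or_lt_of_le hm1 with h1m | h2m
    · -- m = 1
      subst h1m
      have hlt : i < j := by
        have := pow_support B h1 h2 hne
        exact Fin.lt_def.2 (by omega)
      have hB1 : (1 : ℤ) ≤ B i j := by
        have hnn := h3 i j hlt
        have : (B - 1) i j = B i j := N_eq B (ne_of_lt hlt)
        rw [pow_one] at hne
        rw [this] at hne
        omega
      have hzero : ∀ m' : ℕ, 2 ≤ m' → ((B - 1) ^ m') i j = 0 := by
        intro m' hm'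
        by_contra hc
        have : m' ∈ PS B i j := ⟨by omega, hc⟩
        have := le_sSup_PS B h1 h2 this
        omega
      have := hedge i j ⟨hlt, hB1, hzero⟩
      rw [this, pow_one]
    · -- m ≥ 2
      have hm' : m - 1 + 1 = m := by omega
      have hsplit : (B - 1) ^ m = (B - 1) * (B - 1) ^ (m - 1) := by
        conv_lhs => rw [← hm']
        rw [pow_succ']
      rw [hsplit, Matrix.mul_apply] at hne
      obtain ⟨v, -, hterm⟩ := Finset.exists_ne_zero_of_sum_ne_zero hne
      have h_iv : (B - 1) i v ≠ 0 := left_ne_zero_of_mul hterm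
      have h_vj : ((B - 1) ^ (m - 1)) v j ≠ 0 := right_ne_zero_of_mul hterm
      have h_iv1 : (((B - 1) ^ 1 : Matrix (Fin n) (Fin n) ℤ)) i v ≠ 0 := by rwa [pow_one]
      have hpos_vj : 0 < ((B - 1) ^ (m - 1)) v j :=
        lt_of_le_of_ne (pow_nonneg' B h1 h2 h3 _ v j) (Ne.symm h_vj)
      have mem1 : 1 ∈ PS B i v := ⟨le_refl 1, h_iv1⟩
      have ub_iv : ∀ a ∈ PS B i v, a ≤ 1 := by
        intro a ha
        by_contra hc
        have hpos_a : 0 < ((B - 1) ^ a) i v :=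
          lt_of_le_of_ne (pow_nonneg' B h1 h2 h3 _ i v) (Ne.symm ha.2)
        have hle := single_le_pow B h1 h2 h3 a (m - 1) i v j
        have hmul : ((B - 1) ^ (a + (m - 1))) i j ≠ 0 := by
          have := mul_pos hpos_a hpos_vj
          intro h0; rw [h0] at hle; linarith
        have hmem : a + (m - 1) ∈ PS B i j := ⟨by omega, hmul⟩
        have := le_sSup_PS B h1 h2 hmem
        omega
      have hsup_iv : sSup (PS B i v) = 1 :=
        le_antisymm (csSup_le ⟨1, mem1⟩ ub_iv) (le_sSup_PS B h1 h2 mem1)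
      have hedge_iv : t i * t v = -1 := by
        refine hedge i v ⟨?_, ?_, ?_⟩
        · have := pow_support B h1 h2 h_iv1
          exact Fin.lt_def.2 (by omega)
        · have hlt : i < v := by
            have := pow_support B h1 h2 h_iv1
            exact Fin.lt_def.2 (by omega)
          have hnn := h3 i v hlt
          have heq : (B - 1) i v = B i v := N_eq B (ne_of_lt hlt)
          rw [heq] at h_iv
          omega
        · intro m' hm'2
          by_contra hc
          have : m' ∈ PS B i v := ⟨by omega, hc⟩
          have := le_sSup_PS B h1 h2 this
          omega
      have mem_vj : m - 1 ∈ PS B v j := ⟨by omega, h_vj⟩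
      have ub_vj : ∀ b ∈ PS B v j, b ≤ m - 1 := by
        intro b hb
        have hpos_b : 0 < ((B - 1) ^ b) v j :=
          lt_of_le_of_ne (pow_nonneg' B h1 h2 h3 _ v j) (Ne.symm hb.2)
        have hpos_iv : 0 < (((B - 1) ^ 1 : Matrix (Fin n) (Fin n) ℤ)) i v :=
          lt_of_le_of_ne (pow_nonneg' B h1 h2 h3 _ i v) (Ne.symm h_iv1)
        have hle := single_le_pow B h1 h2 h3 1 b i v j
        have hmul : ((B - 1) ^ (1 + b)) i j ≠ 0 := by
          have := mul_pos hpos_iv hpos_b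
          intro h0; rw [h0] at hle; linarith
        have hmem : 1 + b ∈ PS B i j := ⟨by omega, hmul⟩
        have := le_sSup_PS B h1 h2 hmem
        omega
      have hsup_vj : m - 1 = sSup (PS B v j) :=
        le_antisymm (le_sSup_PS B h1 h2 mem_vj) (csSup_le ⟨m - 1, mem_vj⟩ ub_vj)
      have hIH := IH (m - 1) (by omega) (by omega) v j h_vj hsup_vj
      have htv : t v * t v = 1 := by rcases ht v with h | h <;> rw [h] <;> norm_num
      have hcomb : t i * t j = (t i * t v) * (t v * t j) := by
        have : (t i * t v) * (t v * t j) = (t i * t j) * (t v * t v) := by ring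
        rw [this, htv, mul_one]
      rw [hcomb, hedge_iv, hIH, ← pow_succ', hm']

lemma sign_eq_pairing (h1 : ∀ i, B i i = 1) (h2 : ∀ i j : Fin n, j < i → B i j = 0)
    (h3 : ∀ i j : Fin n, i < j → 0 ≤ B i j) (t : Fin n → ℤ)
    (ht : ∀ i, t i = 1 ∨ t i = -1)
    (hedge : ∀ i j, GammaEdge B i j → t i * t j = -1) {i j : Fin n}
    (hij : i < j) (hz : ¬ZeroPair B i j) : t i * t j = pairing B i j := by
  rw [pairing_eq B (ne_of_lt hij) hz]
  have hm := sSup_PS_mem B h1 h2 hz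
  exact sign_pow B h1 h2 h3 t ht hedge _ hm.1 i j hm.2 rfl

end Sign

section Delete
variable (B : Matrix (Fin n) (Fin n) ℤ)

lemma Nd_eq (v : Fin n) {a b : Fin n} (ha : a ≠ v) (hb : b ≠ v) :
    (vertexDelete B v - 1) a b = (B - 1) a b := by
  simp [vertexDelete, Matrix.sub_apply, ha, hb]

lemma Nd_row (h1 : ∀ i, B i i = 1) (v b : Fin n) :
    (vertexDelete B v - 1) v b = 0 := by
  rcases eq_or_ne v b with rfl | hvb
  · simp [vertexDelete, Matrix.sub_apply, Matrix.one_apply, h1 v]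
  · simp [vertexDelete, Matrix.sub_apply, Matrix.one_apply, hvb]

lemma Nd_col (h1 : ∀ i, B i i = 1) (v a : Fin n) :
    (vertexDelete B v - 1) a v = 0 := by
  rcases eq_or_ne a v with rfl | hav
  · simp [vertexDelete, Matrix.sub_apply, Matrix.one_apply, h1 a]
  · simp [vertexDelete, Matrix.sub_apply, Matrix.one_apply, hav]

lemma pow_diag_zero (h1 : ∀ i, B i i = 1) (h2 : ∀ i j : Fin n, j < i → B i j = 0)
    {s : ℕ} (hs : 1 ≤ s) (v : Fin n) : ((B - 1) ^ s) v v = 0 := by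
  by_contra h
  have := pow_support B h1 h2 h
  omega

lemma decompE (h1 : ∀ i, B i i = 1) (h2 : ∀ i j : Fin n, j < i → B i j = 0)
    (v i : Fin n) (hiv : i ≠ v) :
    ∀ m, 1 ≤ m → ∀ j : Fin n, j ≠ v →
      ((B - 1) ^ m) i j = ((vertexDelete B v - 1) ^ m) i j +
        ∑ a ∈ Finset.Ico 1 m, ((B - 1) ^ a) i v * ((B - 1) ^ (m - a)) v j := by
  intro m hm
  induction m, hm using Nat.le_induction with
  | base =>
      intro j hj
      simp [Nd_eq B v hiv hj]
  | succ m hm IH =>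
      intro j hj
      have key : ∀ k : Fin n, ((B - 1) ^ m) i k * (B - 1) k j
          = ((vertexDelete B v - 1) ^ m) i k * (vertexDelete B v - 1) k j
            + (∑ a ∈ Finset.Ico 1 m,
                ((B - 1) ^ a) i v * (((B - 1) ^ (m - a)) v k * (B - 1) k j))
            + (if k = v then ((B - 1) ^ m) i v * (B - 1) v j else 0) := by
        intro k
        by_cases hk : k = v
        · subst hk
          rw [if_pos rfl, Nd_row B h1 k j, mul_zero, zero_add]
          have hz : ∀ a ∈ Finset.Ico 1 m,
              ((B - 1) ^ a) i k * (((B - 1) ^ (m - a)) k k * (B - 1) k j) = 0 := by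
            intro a ha
            rw [Finset.mem_Ico] at ha
            rw [pow_diag_zero B h1 h2 (by omega) k, zero_mul, mul_zero]
          rw [Finset.sum_eq_zero hz, zero_add]
        · rw [if_neg hk, add_zero, Nd_eq B v hk hj, IH k hk, add_mul,
            Finset.sum_mul]
          congr 1
          refine Finset.sum_congr rfl fun a _ => ?_
          ring
      calc ((B - 1) ^ (m + 1)) i j
          = ∑ k, ((B - 1) ^ m) i k * (B - 1) k j := by rw [pow_succ, Matrix.mul_apply]
        _ = ∑ k, (((vertexDelete B v - 1) ^ m) i k * (vertexDelete B v - 1) k j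
              + (∑ a ∈ Finset.Ico 1 m,
                  ((B - 1) ^ a) i v * (((B - 1) ^ (m - a)) v k * (B - 1) k j))
              + (if k = v then ((B - 1) ^ m) i v * (B - 1) v j else 0)) :=
            Finset.sum_congr rfl fun k _ => key k
        _ = (∑ k, ((vertexDelete B v - 1) ^ m) i k * (vertexDelete B v - 1) k j)
              + (∑ k, ∑ a ∈ Finset.Ico 1 m,
                  ((B - 1) ^ a) i v * (((B - 1) ^ (m - a)) v k * (B - 1) k j))
              + (∑ k : Fin n, if k = v then ((B - 1) ^ m) i v * (B - 1) v j else 0) := by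
            rw [Finset.sum_add_distrib, Finset.sum_add_distrib]
        _ = ((vertexDelete B v - 1) ^ (m + 1)) i j
              + (∑ a ∈ Finset.Ico 1 m,
                  ((B - 1) ^ a) i v * ((B - 1) ^ (m + 1 - a)) v j)
              + ((B - 1) ^ m) i v * ((B - 1) ^ (m + 1 - m)) v j := by
            have e1 : (∑ k, ((vertexDelete B v - 1) ^ m) i k * (vertexDelete B v - 1) k j)
                = ((vertexDelete B v - 1) ^ (m + 1)) i j := by
              rw [pow_succ, Matrix.mul_apply]
            have e2 : (∑ k, ∑ a ∈ Finset.Ico 1 m,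
                  ((B - 1) ^ a) i v * (((B - 1) ^ (m - a)) v k * (B - 1) k j))
                = ∑ a ∈ Finset.Ico 1 m,
                  ((B - 1) ^ a) i v * ((B - 1) ^ (m + 1 - a)) v j := by
              rw [Finset.sum_comm]
              refine Finset.sum_congr rfl fun a ha => ?_
              rw [Finset.mem_Ico] at ha
              rw [← Finset.mul_sum]
              congr 1
              have hma : m + 1 - a = (m - a) + 1 := by omega
              rw [hma, pow_succ, Matrix.mul_apply]
            have e3 : (∑ k : Fin n, if k = v then ((B - 1) ^ m) i v * (B - 1) v j else 0)
                = ((B - 1) ^ m) i v * ((B - 1) ^ (m + 1 - m)) v j := by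
              have hmm : m + 1 - m = 1 := by omega
              rw [hmm, pow_one]
              simp
            rw [e1, e2, e3]
        _ = ((vertexDelete B v - 1) ^ (m + 1)) i j
              + ∑ a ∈ Finset.Ico 1 (m + 1),
                  ((B - 1) ^ a) i v * ((B - 1) ^ (m + 1 - a)) v j := by
            rw [Finset.sum_Ico_succ_top hm, add_assoc]

end Delete

section Composite
variable (B : Matrix (Fin n) (Fin n) ℤ)
variable (h1 : ∀ i, B i i = 1) (h2 : ∀ i j : Fin n, j < i → B i j = 0)
    (h3 : ∀ i j : Fin n, i < j → 0 ≤ B i j)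
variable {i v j : Fin n} (hiv : i < v) (hvj : v < j)
variable (hdel : ∀ m : ℕ, 1 ≤ m → ((vertexDelete B v - 1) ^ m) i j = 0)

include h1 h2 hiv hvj hdel

lemma comp_pow {m : ℕ} (hm : 1 ≤ m) :
    ((B - 1) ^ m) i j = ∑ a ∈ Finset.Ico 1 m, ((B - 1) ^ a) i v * ((B - 1) ^ (m - a)) v j := by
  rw [decompE B h1 h2 v i (ne_of_lt hiv) m hm j (ne_of_gt hvj), hdel m hm, zero_add]

lemma comp_notZero (hz : ¬ZeroPair B i j) : ¬ZeroPair B i v ∧ ¬ZeroPair B v j := by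
  obtain ⟨m, hm1, hm⟩ := (not_zeroPair_iff B i j).1 hz
  rw [comp_pow B h1 h2 hiv hvj hdel hm1] at hm
  obtain ⟨a, ha, hterm⟩ := Finset.exists_ne_zero_of_sum_ne_zero hm
  rw [Finset.mem_Ico] at ha
  exact ⟨(not_zeroPair_iff B i v).2 ⟨a, ha.1, left_ne_zero_of_mul hterm⟩,
    (not_zeroPair_iff B v j).2 ⟨m - a, by omega, right_ne_zero_of_mul hterm⟩⟩

include h3 in
lemma comp_sSup (hz : ¬ZeroPair B i j) :
    sSup (PS B i j) = sSup (PS B i v) + sSup (PS B v j) := by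
  obtain ⟨hz1, hz2⟩ := comp_notZero B h1 h2 hiv hvj hdel hz
  obtain ⟨hL1a, hL1b⟩ := sSup_PS_mem B h1 h2 hz1
  obtain ⟨hL2a, hL2b⟩ := sSup_PS_mem B h1 h2 hz2
  obtain ⟨hLa, hLb⟩ := sSup_PS_mem B h1 h2 hz
  refine le_antisymm ?_ ?_
  · rw [comp_pow B h1 h2 hiv hvj hdel hLa] at hLb
    obtain ⟨a, ha, hterm⟩ := Finset.exists_ne_zero_of_sum_ne_zero hLb
    rw [Finset.mem_Ico] at ha
    have h1' : a ≤ sSup (PS B i v) :=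
      le_sSup_PS B h1 h2 ⟨ha.1, left_ne_zero_of_mul hterm⟩
    have h2' : sSup (PS B i j) - a ≤ sSup (PS B v j) :=
      le_sSup_PS B h1 h2 ⟨by omega, right_ne_zero_of_mul hterm⟩
    omega
  · have hp1 : 0 < ((B - 1) ^ (sSup (PS B i v))) i v :=
      lt_of_le_of_ne (pow_nonneg' B h1 h2 h3 _ i v) (Ne.symm hL1b)
    have hp2 : 0 < ((B - 1) ^ (sSup (PS B v j))) v j :=
      lt_of_le_of_ne (pow_nonneg' B h1 h2 h3 _ v j) (Ne.symm hL2b)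
    have hle := single_le_pow B h1 h2 h3 (sSup (PS B i v)) (sSup (PS B v j)) i v j
    have hne : ((B - 1) ^ (sSup (PS B i v) + sSup (PS B v j))) i j ≠ 0 := by
      have := mul_pos hp1 hp2
      intro h0; rw [h0] at hle; linarith
    exact le_sSup_PS B h1 h2 ⟨by omega, hne⟩

include h3 in
lemma pairing_mul (hz : ¬ZeroPair B i j) :
    pairing B i j = pairing B i v * pairing B v j := by
  obtain ⟨hz1, hz2⟩ := comp_notZero B h1 h2 hiv hvj hdel hz
  rw [pairing_eq B (ne_of_lt (hiv.trans hvj)) hz, pairing_eq B (ne_of_lt hiv) hz1,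
    pairing_eq B (ne_of_lt hvj) hz2, comp_sSup B h1 h2 h3 hiv hvj hdel hz, pow_add]

lemma comp_pow_range {m : ℕ} (hm : m < n) :
    ((B - 1) ^ m) i j = ∑ a ∈ Finset.range n, ((B - 1) ^ a) i v * ((B - 1) ^ (m - a)) v j := by
  have hvjne : v ≠ j := ne_of_lt hvj
  have hivne : i ≠ v := ne_of_lt hiv
  rcases Nat.eq_zero_or_pos m with rfl | hm1
  · rw [pow_zero, Matrix.one_apply_ne (ne_of_lt (hiv.trans hvj))]
    symm
    refine Finset.sum_eq_zero fun a ha => ?_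
    rcases Nat.eq_zero_or_pos a with rfl | ha1
    · rw [pow_zero, Matrix.one_apply_ne hivne, zero_mul]
    · rw [show 0 - a = 0 from by omega, pow_zero, Matrix.one_apply_ne hvjne, mul_zero]
  · rw [comp_pow B h1 h2 hiv hvj hdel hm1]
    refine Finset.sum_subset ?_ ?_
    · intro a ha
      rw [Finset.mem_Ico] at ha
      rw [Finset.mem_range]
      omega
    · intro a ha hna
      rw [Finset.mem_range] at ha
      rw [Finset.mem_Ico] at hna
      push_neg at hna
      rcases Nat.eq_zero_or_pos a with rfl | ha1
      · rw [pow_zero, Matrix.one_apply_ne hivne, zero_mul]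
      · have hma : m ≤ a := hna ha1
        rw [show m - a = 0 from by omega, pow_zero, Matrix.one_apply_ne hvjne, mul_zero]

lemma comp_vanish {a b : ℕ} (hab : n ≤ a + b) :
    ((B - 1) ^ a) i v = 0 ∨ ((B - 1) ^ b) v j = 0 := by
  rcases eq_or_ne (((B - 1) ^ a) i v) 0 with h | h
  · exact Or.inl h
  rcases eq_or_ne (((B - 1) ^ b) v j) 0 with h' | h'
  · exact Or.inr h'
  exfalso
  have := pow_support B h1 h2 h
  have := pow_support B h1 h2 h'
  have := j.isLt
  omega

lemma comp_inv : B⁻¹ i j = B⁻¹ i v * B⁻¹ v j := by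
  have hvjne : v ≠ j := ne_of_lt hvj
  rw [inv_apply B h1 h2 i j, inv_apply B h1 h2 i v, inv_apply B h1 h2 v j,
    Finset.sum_mul_sum]
  calc ∑ m ∈ Finset.range n, (-1 : ℤ) ^ m * ((B - 1) ^ m) i j
      = ∑ m ∈ Finset.range n, ∑ a ∈ Finset.range n,
          ((-1 : ℤ) ^ a * ((B - 1) ^ a) i v) * ((-1 : ℤ) ^ (m - a) * ((B - 1) ^ (m - a)) v j) := by
        refine Finset.sum_congr rfl fun m hmem => ?_
        rw [comp_pow_range B h1 h2 hiv hvj hdel (Finset.mem_range.1 hmem), Finset.mul_sum]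
        refine Finset.sum_congr rfl fun a _ => ?_
        by_cases ham : a ≤ m
        · have hpow : (-1 : ℤ) ^ m = (-1) ^ a * (-1) ^ (m - a) := by
            rw [← pow_add]
            congr 1
            omega
          rw [hpow]; ring
        · rw [show m - a = 0 from by omega, pow_zero, pow_zero,
            Matrix.one_apply_ne hvjne]
          ring
    _ = ∑ a ∈ Finset.range n, ∑ m ∈ Finset.range n,
          ((-1 : ℤ) ^ a * ((B - 1) ^ a) i v) * ((-1 : ℤ) ^ (m - a) * ((B - 1) ^ (m - a)) v j) :=
        Finset.sum_comm
    _ = ∑ a ∈ Finset.range n, ∑ b ∈ Finset.range n,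
          ((-1 : ℤ) ^ a * ((B - 1) ^ a) i v) * ((-1 : ℤ) ^ b * ((B - 1) ^ b) v j) := by
        refine Finset.sum_congr rfl fun a _ => ?_
        by_cases hxa : ((B - 1) ^ a) i v = 0
        · simp [hxa]
        · have hav := pow_support B h1 h2 hxa
          have hvn := v.isLt
          have han : a < n := by omega
          have e1 : ∑ m ∈ Finset.range n,
                ((-1 : ℤ) ^ a * ((B - 1) ^ a) i v) * ((-1 : ℤ) ^ (m - a) * ((B - 1) ^ (m - a)) v j)
              = ∑ m ∈ Finset.Ico a n,
                ((-1 : ℤ) ^ a * ((B - 1) ^ a) i v) * ((-1 : ℤ) ^ (m - a) * ((B - 1) ^ (m - a)) v j) := by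
            symm
            rw [Finset.range_eq_Ico]
            refine Finset.sum_subset ?_ ?_
            · intro x hx; rw [Finset.mem_Ico] at hx ⊢; omega
            · intro x hx hnx
              rw [Finset.mem_Ico] at hx hnx
              push_neg at hnx
              rw [show x - a = 0 from by omega]
              simp [Matrix.one_apply_ne hvjne]
          rw [e1, Finset.sum_Ico_eq_sum_range]
          have e2 : ∀ b ∈ Finset.range (n - a),
              ((-1 : ℤ) ^ a * ((B - 1) ^ a) i v) * ((-1 : ℤ) ^ (a + b - a) * ((B - 1) ^ (a + b - a)) v j)
              = ((-1 : ℤ) ^ a * ((B - 1) ^ a) i v) * ((-1 : ℤ) ^ b * ((B - 1) ^ b) v j) := by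
            intro b _
            rw [show a + b - a = b from by omega]
          rw [Finset.sum_congr rfl e2]
          refine Finset.sum_subset ?_ ?_
          · intro x hx; rw [Finset.mem_range] at hx ⊢; omega
          · intro b hb hnb
            rw [Finset.mem_range] at hb hnb
            rcases comp_vanish B h1 h2 hiv hvj hdel (a := a) (b := b) (by omega) with h | h
            · exact absurd h hxa
            · rw [h]
              ring

end Composite

section Main
variable (B : Matrix (Fin n) (Fin n) ℤ)
variable (h1 : ∀ i, B i i = 1) (h2 : ∀ i j : Fin n, j < i → B i j = 0)
    (h3 : ∀ i j : Fin n, i < j → 0 ≤ B i j)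

include h1 h2 in
lemma unit_inv {i j : Fin n} (hij : i < j)
    (hU2 : ∀ m : ℕ, 2 ≤ m → ((B - 1) ^ m) i j = 0) : B⁻¹ i j = -(B i j) := by
  have hij' : i ≠ j := ne_of_lt hij
  have hn2 : 1 < n := by
    have := (Fin.lt_def).1 hij
    have := j.isLt
    omega
  rw [inv_apply B h1 h2 i j]
  rw [Finset.sum_eq_single_of_mem 1 (Finset.mem_range.2 hn2)]
  · rw [pow_one, pow_one, N_eq B hij']
    ring
  · intro m _ hm1
    rcases Nat.eq_zero_or_pos m with rfl | hmp
    · simp [Matrix.one_apply_ne hij']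
    · have : 2 ≤ m := by omega
      rw [hU2 m this, mul_zero]

include h1 h2 h3 in
lemma SL1 (hp : ∀ i j : Fin n, PrimePair B i j → 0 ≤ pairing B i j * B⁻¹ i j) :
    ∀ d : ℕ, ∀ i j : Fin n, (j : ℕ) - (i : ℕ) ≤ d → i < j → ¬ZeroPair B i j →
      0 ≤ pairing B i j * B⁻¹ i j := by
  intro d
  induction d using Nat.strong_induction_on with
  | _ d IH =>
    intro i j hd hij hz
    by_cases hU : UnitPair B i j
    · have hij' : i ≠ j := ne_of_lt hij
      have hinv : B⁻¹ i j = -(B i j) := unit_inv B h1 h2 hij hU.2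
      have hsup1 : sSup (PS B i j) = 1 := by
        obtain ⟨m, hm1, hm⟩ := (not_zeroPair_iff B i j).1 hz
        have hm'' : m = 1 := by
          by_contra hc
          exact hm (hU.2 m (by omega))
        subst hm''
        refine le_antisymm (csSup_le ⟨1, ⟨le_refl 1, hm⟩⟩ ?_) (le_sSup_PS B h1 h2 ⟨le_refl 1, hm⟩)
        intro b hb
        by_contra hc
        exact hb.2 (hU.2 b (by omega))
      rw [pairing_eq B hij' hz, hsup1, pow_one, hinv]
      have := h3 i j hij
      linarith
    · by_cases hC : CompositePair B i j
      · obtain ⟨v, hiv, hvj, hdel⟩ := hC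
        obtain ⟨hz1, hz2⟩ := comp_notZero B h1 h2 hiv hvj hdel hz
        have fiv := (Fin.lt_def).1 hiv
        have fvj := (Fin.lt_def).1 hvj
        have fij := (Fin.lt_def).1 hij
        have hIH1 := IH ((v : ℕ) - (i : ℕ)) (by omega) i v (le_refl _) hiv hz1
        have hIH2 := IH ((j : ℕ) - (v : ℕ)) (by omega) v j (le_refl _) hvj hz2
        rw [pairing_mul B h1 h2 h3 hiv hvj hdel hz, comp_inv B h1 h2 hiv hvj hdel]
        have hrw : pairing B i v * pairing B v j * (B⁻¹ i v * B⁻¹ v j)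
            = (pairing B i v * B⁻¹ i v) * (pairing B v j * B⁻¹ v j) := by ring
        rw [hrw]
        exact mul_nonneg hIH1 hIH2
      · exact hp i j ⟨hij, hz, hU, hC⟩

end Main

end Stmt11Aux

open Stmt11Aux in
/-- `B` is signable iff `Γ_D` is bipartite and every prime pair
`(i,j)` of `D` is signable (`⟨i,j⟩ * (B⁻¹) i j ≥ 0`). -/
theorem stmt11 {n : ℕ} (hn : 1 ≤ n) (B : Matrix (Fin n) (Fin n) ℤ)
    (h1 : ∀ i, B i i = 1) (h2 : ∀ i j : Fin n, j < i → B i j = 0)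
    (h3 : ∀ i j : Fin n, i < j → 0 ≤ B i j) :
    IsSignable B⁻¹ ↔
      (GammaBipartite B ∧
        ∀ i j : Fin n, PrimePair B i j → 0 ≤ pairing B i j * B⁻¹ i j) := by
  constructor
  · rintro ⟨s, hs, hsig⟩
    have hedge : ∀ i j, GammaEdge B i j → s i * s j = -1 := by
      intro i j he
      obtain ⟨hij, hB, hz2⟩ := he
      have hinv : B⁻¹ i j = -(B i j) := unit_inv B h1 h2 hij hz2
      have habs := hsig i j
      rw [hinv, abs_neg, abs_of_pos (by linarith : (0:ℤ) < B i j)] at habs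
      rcases hs i with hi | hi <;> rcases hs j with hj | hj <;>
        rw [hi, hj] at habs ⊢ <;> norm_num at habs ⊢ <;> linarith
    constructor
    · refine ⟨fun i => decide (s i = 1), fun i j he => ?_⟩
      have hsij := hedge i j he
      rcases hs i with hi | hi <;> rcases hs j with hj | hj <;>
        rw [hi, hj] at hsij <;> simp [hi, hj] <;> norm_num at hsij
    · intro i j hpp
      obtain ⟨hij, hz, -, -⟩ := hpp
      have hsp := sign_eq_pairing B h1 h2 h3 s hs hedge hij hz
      have habs := hsig i j
      have hre : pairing B i j * B⁻¹ i j = s i * B⁻¹ i j * s j := by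
        rw [← hsp]; ring
      rw [hre, habs]
      exact abs_nonneg _
  · rintro ⟨⟨c, hc⟩, hp⟩
    set s : Fin n → ℤ := fun i => if c i then 1 else -1 with hs_def
    have hs : ∀ i, s i = 1 ∨ s i = -1 := by
      intro i
      by_cases h : c i <;> simp [hs_def, h]
    have hedge : ∀ i j, GammaEdge B i j → s i * s j = -1 := by
      intro i j he
      have hcij := hc i j he
      by_cases h : c i <;> by_cases h' : c j <;>
        simp [hs_def, h, h'] at hcij ⊢
    refine ⟨s, hs, ?_⟩
    intro i j
    rcases lt_trichotomy i j with hij | rfl | hji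
    · by_cases hz : ZeroPair B i j
      · have hinv : B⁻¹ i j = 0 := by
          rw [inv_upper B h1 h2 (ne_of_lt hij)]
          refine Finset.sum_eq_zero fun m hm => ?_
          rw [Finset.mem_Ico] at hm
          rw [hz m hm.1, mul_zero]
        rw [hinv]
        simp
      · have hsp := sign_eq_pairing B h1 h2 h3 s hs hedge hij hz
        have hSL := SL1 B h1 h2 h3 hp ((j : ℕ) - (i : ℕ)) i j (le_refl _) hij hz
        have hpm := pairing_pm B (ne_of_lt hij) hz
        have hre : s i * B⁻¹ i j * s j = pairing B i j * B⁻¹ i j := by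
          rw [← hsp]; ring
        rw [hre]
        rcases hpm with h | h <;> rw [h] at hSL ⊢
        · rw [one_mul]
          exact (abs_of_nonneg (by linarith)).symm
        · rw [abs_of_nonpos (by linarith)]
          ring
    · rw [inv_diag B h1 h2 hn i]
      rcases hs i with h | h <;> rw [h] <;> norm_num
    · rw [inv_lower B h1 h2 hji]
      simp
end

section
/- B is signable and |(B⁻¹)_{i,j}| ≤ 1 for all i, j (i.e., D is simply invertible) if and only if Γ_D is bipartite, B_{i,j} ≤ 1 for every edge {i,j} of Γ_D (Γ_D is simple), and every prime pair (i,j) of D is simply signable. -/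
open Matrix

set_option linter.unusedSectionVars false

namespace Stmt12Aux

variable {n : ℕ}

noncomputable def binv (B : Matrix (Fin n) (Fin n) ℤ) : Matrix (Fin n) (Fin n) ℤ :=
  ∑ m ∈ Finset.range n, (-(B - 1)) ^ m

variable (B : Matrix (Fin n) (Fin n) ℤ)

lemma negpow (m : ℕ) : (-(B - 1)) ^ m = ((-1 : ℤ) ^ m) • ((B - 1) ^ m) := by
  induction m with
  | zero => simp
  | succ m ih =>
      rw [pow_succ, pow_succ, pow_succ, ih, smul_mul_assoc, mul_neg, smul_neg, mul_neg_one,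
        neg_smul]

lemma binv_apply (i j : Fin n) :
    binv B i j = ∑ m ∈ Finset.range n, (-1 : ℤ) ^ m * ((B - 1) ^ m) i j := by
  rw [binv, Matrix.sum_apply]
  exact Finset.sum_congr rfl fun m _ => by rw [negpow, Matrix.smul_apply, smul_eq_mul]

variable (h1 : ∀ i, B i i = 1) (h2 : ∀ i j : Fin n, j < i → B i j = 0)
  (h3 : ∀ i j : Fin n, i < j → 0 ≤ B i j)

lemma sub_one_apply_ne {i j : Fin n} (h : i ≠ j) : (B - 1) i j = B i j := by
  simp [Matrix.sub_apply, Matrix.one_apply_ne h]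

include h1 h2 in
lemma sub_one_zero {i j : Fin n} (h : ¬ i < j) : (B - 1) i j = 0 := by
  rcases eq_or_ne i j with rfl | hne
  · simp [Matrix.sub_apply, h1, Matrix.one_apply_eq]
  · have hji : j < i := (not_lt.mp h).lt_of_ne (Ne.symm hne)
    rw [sub_one_apply_ne B hne, h2 _ _ hji]

include h1 h2 h3 in
lemma sub_one_nonneg (i j : Fin n) : 0 ≤ (B - 1) i j := by
  by_cases h : i < j
  · rw [sub_one_apply_ne B h.ne]; exact h3 _ _ h
  · rw [sub_one_zero B h1 h2 h]

include h1 h2 h3 in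
lemma pow_apply_nonneg : ∀ (m : ℕ) (i j : Fin n), 0 ≤ ((B - 1) ^ m) i j := by
  intro m
  induction m with
  | zero =>
      intro i j
      rcases eq_or_ne i j with rfl | hne
      · simp
      · simp [Matrix.one_apply_ne hne]
  | succ m ih =>
      intro i j
      rw [pow_succ, Matrix.mul_apply]
      exact Finset.sum_nonneg fun k _ => mul_nonneg (ih i k) (sub_one_nonneg B h1 h2 h3 k j)

include h1 h2 in
lemma pow_apply_eq_zero : ∀ (m : ℕ) (i j : Fin n), (j : ℕ) < (i : ℕ) + m → ((B - 1) ^ m) i j = 0 := by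
  intro m
  induction m with
  | zero =>
      intro i j h
      have : i ≠ j := by intro e; subst e; omega
      simp [Matrix.one_apply_ne this]
  | succ m ih =>
      intro i j h
      rw [pow_succ', Matrix.mul_apply]
      refine Finset.sum_eq_zero fun k _ => ?_
      by_cases hik : i < k
      · have hik' : (i : ℕ) < (k : ℕ) := hik
        rw [ih k j (by omega), mul_zero]
      · rw [sub_one_zero B h1 h2 hik, zero_mul]

include h1 h2 in
lemma pow_n_eq_zero : (B - 1) ^ n = 0 := by
  ext i j
  have := j.isLt
  simpa using pow_apply_eq_zero B h1 h2 n i j (by omega)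

include h1 h2 in
lemma binv_mul : binv B * B = 1 := by
  have hg := geom_sum_mul (-(B - 1)) n
  have hx : (-(B - 1)) - 1 = -B := by abel
  have hxn : (-(B - 1)) ^ n = 0 := by
    rw [negpow, pow_n_eq_zero B h1 h2, smul_zero]
  rw [hx, hxn, zero_sub, mul_neg] at hg
  have : binv B * B = 1 := neg_inj.mp hg
  exact this

include h1 h2 in
lemma inv_eq : B⁻¹ = binv B := Matrix.inv_eq_left_inv (binv_mul B h1 h2)

include h1 h2 in
lemma mul_binv : B * binv B = 1 := by
  rw [mul_eq_one_comm]; exact binv_mul B h1 h2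

include h1 h2 in
lemma binv_diag (hn : 1 ≤ n) (i : Fin n) : binv B i i = 1 := by
  rw [binv_apply, Finset.sum_eq_single 0]
  · simp
  · intro m hm hm0
    rw [pow_apply_eq_zero B h1 h2 m i i (by omega), mul_zero]
  · intro h
    exact absurd (Finset.mem_range.mpr hn) h

include h1 h2 in
lemma binv_lower {i j : Fin n} (h : j < i) : binv B i j = 0 := by
  rw [binv_apply]
  refine Finset.sum_eq_zero fun m _ => ?_
  have : (j : ℕ) < (i : ℕ) := h
  rw [pow_apply_eq_zero B h1 h2 m i j (by omega), mul_zero]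

include h1 h2 h3 in
lemma single_le_pow (a b : ℕ) (i k j : Fin n) :
    ((B - 1) ^ a) i k * ((B - 1) ^ b) k j ≤ ((B - 1) ^ (a + b)) i j := by
  rw [pow_add, Matrix.mul_apply]
  exact Finset.single_le_sum
    (fun k _ => mul_nonneg (pow_apply_nonneg B h1 h2 h3 a i k) (pow_apply_nonneg B h1 h2 h3 b k j))
    (Finset.mem_univ k)

include h1 h2 h3 in
lemma pow_ne_zero_trans {a b : ℕ} {i k j : Fin n} (ha : ((B - 1) ^ a) i k ≠ 0)
    (hb : ((B - 1) ^ b) k j ≠ 0) : ((B - 1) ^ (a + b)) i j ≠ 0 := by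
  have ha' : 0 < ((B - 1) ^ a) i k := (pow_apply_nonneg B h1 h2 h3 a i k).lt_of_ne (Ne.symm ha)
  have hb' : 0 < ((B - 1) ^ b) k j := (pow_apply_nonneg B h1 h2 h3 b k j).lt_of_ne (Ne.symm hb)
  exact ne_of_gt (lt_of_lt_of_le (mul_pos ha' hb') (single_le_pow B h1 h2 h3 a b i k j))

include h1 h2 in
lemma binv_unit {i j : Fin n} (hij : i < j) (hu : ∀ m, 2 ≤ m → ((B - 1) ^ m) i j = 0) :
    binv B i j = -(B i j) := by
  have hij' : (i : ℕ) < (j : ℕ) := hij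
  have hn2 : 1 < n := by have := j.isLt; omega
  rw [binv_apply, Finset.sum_eq_single 1]
  · rw [pow_one, pow_one, sub_one_apply_ne B hij.ne]; ring
  · intro m hm hm1
    match m, hm1 with
    | 0, _ => simp [Matrix.one_apply_ne hij.ne]
    | (k+2), _ => rw [hu (k+2) (by omega), mul_zero]
  · intro h
    exact absurd (Finset.mem_range.mpr hn2) h


include h1 h2 h3 in
lemma signChain (s : Fin n → ℤ) (hs : ∀ i, s i = 1 ∨ s i = -1)
    (hflip : ∀ i j, GammaEdge B i j → s i * s j = -1) :
    ∀ (L : ℕ) (i j : Fin n), 1 ≤ L → ((B - 1) ^ L) i j ≠ 0 →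
      (∀ m, ((B - 1) ^ m) i j ≠ 0 → m ≤ L) → s i * s j = (-1) ^ L := by
  intro L
  induction L with
  | zero => intro i j h; omega
  | succ L ih =>
      intro i j _ hNL hmax
      rw [pow_succ', Matrix.mul_apply] at hNL
      obtain ⟨k, -, hk⟩ := Finset.exists_ne_zero_of_sum_ne_zero hNL
      have hik : (B - 1) i k ≠ 0 := fun h => hk (by rw [h, zero_mul])
      have hkj : ((B - 1) ^ L) k j ≠ 0 := fun h => hk (by rw [h, mul_zero])
      have hik' : i < k := by
        by_contra h; exact hik (sub_one_zero B h1 h2 h)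
      have hedge : GammaEdge B i k := by
        refine ⟨hik', ?_, ?_⟩
        · have he : (B - 1) i k = B i k := sub_one_apply_ne B hik'.ne
          have h0 : 0 ≤ (B - 1) i k := sub_one_nonneg B h1 h2 h3 i k
          rw [he] at hik h0
          omega
        · intro m hm
          by_contra hne
          have h := pow_ne_zero_trans B h1 h2 h3 hne hkj
          have := hmax (m + L) h
          omega
      rcases Nat.eq_zero_or_pos L with rfl | hL
      · have hkj' : k = j := by
          by_contra h
          exact hkj (Matrix.one_apply_ne h)
        subst hkj'
        simpa using hflip i k hedge
      · have hmax' : ∀ m, ((B - 1) ^ m) k j ≠ 0 → m ≤ L := by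
          intro m hm
          have hik1 : ((B - 1) ^ (1:ℕ)) i k ≠ 0 := by rw [pow_one]; exact hik
          have h := pow_ne_zero_trans B h1 h2 h3 hik1 hm
          have := hmax (1 + m) h
          omega
        have hskj := ih k j hL hkj hmax'
        have hsik := hflip i k hedge
        have hk2 : s k * s k = 1 := by rcases hs k with h | h <;> rw [h] <;> norm_num
        rw [pow_succ]
        calc s i * s j = (s i * s j) * (s k * s k) := by rw [hk2, mul_one]
        _ = (s k * s j) * (s i * s k) := by ring
        _ = (-1) ^ L * (-1) := by rw [hskj, hsik]

include h1 h2 in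
lemma pairing_spec {i j : Fin n} (hij : i < j) (hnz : ¬ ZeroPair B i j) :
    ∃ L : ℕ, pairing B i j = (-1) ^ L ∧ 1 ≤ L ∧ ((B - 1) ^ L) i j ≠ 0 ∧
      (∀ m, ((B - 1) ^ m) i j ≠ 0 → m ≤ L) := by
  have hex : ∃ m : ℕ, 1 ≤ m ∧ ((B - 1) ^ m) i j ≠ 0 := by
    unfold ZeroPair at hnz; push_neg at hnz; exact hnz
  have hbdd : BddAbove {m : ℕ | 1 ≤ m ∧ ((B - 1) ^ m) i j ≠ 0} := by
    refine ⟨n, fun m hm => ?_⟩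
    have h := hm.2
    have hle : ¬ ((j : ℕ) < (i : ℕ) + m) := fun hlt => h (pow_apply_eq_zero B h1 h2 m i j hlt)
    have := j.isLt
    omega
  have hmem : sSup {m : ℕ | 1 ≤ m ∧ ((B - 1) ^ m) i j ≠ 0} ∈
      {m : ℕ | 1 ≤ m ∧ ((B - 1) ^ m) i j ≠ 0} :=
    Nat.sSup_mem ⟨hex.choose, hex.choose_spec⟩ hbdd
  refine ⟨sSup {m : ℕ | 1 ≤ m ∧ ((B - 1) ^ m) i j ≠ 0}, ?_, hmem.1, hmem.2, ?_⟩
  · unfold pairing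
    rw [if_neg hij.ne, if_pos hex]
  · intro m hm
    by_cases h1m : 1 ≤ m
    · exact le_csSup hbdd ⟨h1m, hm⟩
    · omega



section Composite

variable (v : Fin n)

include h1 in
lemma vd_h1 : ∀ i, vertexDelete B v i i = 1 := by
  intro i; simp [vertexDelete, h1]

include h2 in
lemma vd_h2 : ∀ i j : Fin n, j < i → vertexDelete B v i j = 0 := by
  intro i j h
  simp only [vertexDelete, Matrix.of_apply]
  split
  · rfl
  · exact h2 i j h

include h3 in
lemma vd_h3 : ∀ i j : Fin n, i < j → 0 ≤ vertexDelete B v i j := by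
  intro i j h
  simp only [vertexDelete, Matrix.of_apply]
  split
  · exact le_refl 0
  · exact h3 i j h

include h1 in
lemma vd_col (p : Fin n) : (vertexDelete B v - 1) p v = 0 := by
  by_cases hp : p = v
  · subst hp
    simp [Matrix.sub_apply, vertexDelete, Matrix.one_apply_eq, h1]
  · rw [sub_one_apply_ne _ hp]
    simp only [vertexDelete, Matrix.of_apply]
    exact if_pos ⟨hp, Or.inr trivial⟩

include h1 in
lemma vd_pow_col (t : ℕ) (p : Fin n) (hp : p ≠ v) : ((vertexDelete B v - 1) ^ t) p v = 0 := by
  cases t with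
  | zero => simp [Matrix.one_apply_ne hp]
  | succ t =>
      rw [pow_succ, Matrix.mul_apply]
      exact Finset.sum_eq_zero fun k _ => by rw [vd_col B h1 v k, mul_zero]

include h1 in
lemma C_col (p : Fin n) (hp : p ≠ v) : binv (vertexDelete B v) p v = 0 := by
  rw [binv_apply]
  exact Finset.sum_eq_zero fun m _ => by rw [vd_pow_col B h1 v m p hp, mul_zero]

lemma E_zero (p q : Fin n) (hp : p ≠ v) (hq : q ≠ v) : (B - vertexDelete B v) p q = 0 := by
  simp only [Matrix.sub_apply, vertexDelete, Matrix.of_apply]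
  rw [if_neg]
  · ring
  · rintro ⟨-, h | h⟩
    · exact hp h
    · exact hq h

include h1 in
lemma CE_zero (i q : Fin n) (hi : i ≠ v) (hq : q ≠ v) :
    (binv (vertexDelete B v) * (B - vertexDelete B v)) i q = 0 := by
  rw [Matrix.mul_apply]
  refine Finset.sum_eq_zero fun p _ => ?_
  by_cases hp : p = v
  · rw [hp, C_col B h1 v i hi, zero_mul]
  · rw [E_zero B v p q hp hq, mul_zero]

include h1 h2 in
lemma matId : binv B = binv (vertexDelete B v)
    - binv (vertexDelete B v) * ((B - vertexDelete B v) * binv B) := by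
  have hCB : binv (vertexDelete B v) * vertexDelete B v = 1 :=
    binv_mul (vertexDelete B v) (vd_h1 B h1 v) (vd_h2 B h2 v)
  have hBB : B * binv B = 1 := mul_binv B h1 h2
  calc binv B = (binv (vertexDelete B v) * vertexDelete B v) * binv B := by rw [hCB, one_mul]
  _ = binv (vertexDelete B v) * (vertexDelete B v * binv B) := by rw [mul_assoc]
  _ = binv (vertexDelete B v) * ((B - (B - vertexDelete B v)) * binv B) := by rw [sub_sub_cancel]
  _ = binv (vertexDelete B v) * (B * binv B - (B - vertexDelete B v) * binv B) := by rw [sub_mul]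
  _ = binv (vertexDelete B v) * (1 - (B - vertexDelete B v) * binv B) := by rw [hBB]
  _ = binv (vertexDelete B v) - binv (vertexDelete B v) * ((B - vertexDelete B v) * binv B) := by
      rw [mul_sub, mul_one]

include h1 h2 in
lemma entry_fact {i : Fin n} (j : Fin n) (hi : i ≠ v) :
    binv B i j = binv (vertexDelete B v) i j
      - (binv (vertexDelete B v) * (B - vertexDelete B v)) i v * binv B v j := by
  have h := congrArg (fun M : Matrix (Fin n) (Fin n) ℤ => M i j) (matId B h1 h2 v)
  simp only [Matrix.sub_apply] at h
  rw [h, ← mul_assoc, Matrix.mul_apply (M := binv (vertexDelete B v) * (B - vertexDelete B v))]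
  congr 1
  rw [Finset.sum_eq_single v]
  · intro q _ hq
    rw [CE_zero B h1 v i q hi hq, zero_mul]
  · intro h; exact absurd (Finset.mem_univ v) h

include h1 h2 in
lemma compFact (hn : 1 ≤ n) {i j : Fin n} (hiv : i < v) (hvj : v < j)
    (hz : ∀ t : ℕ, 1 ≤ t → ((vertexDelete B v - 1) ^ t) i j = 0) :
    binv B i j = binv B i v * binv B v j := by
  have hij : i ≠ j := (hiv.trans hvj).ne
  have hCij : binv (vertexDelete B v) i j = 0 := by
    rw [binv_apply]
    refine Finset.sum_eq_zero fun m _ => ?_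
    cases m with
    | zero => simp [Matrix.one_apply_ne hij]
    | succ m => rw [hz (m + 1) (by omega), mul_zero]
  have e1 := entry_fact B h1 h2 v j hiv.ne
  have e2 := entry_fact B h1 h2 v v hiv.ne
  rw [C_col B h1 v i hiv.ne, binv_diag B h1 h2 hn v, mul_one, zero_sub] at e2
  rw [hCij, zero_sub] at e1
  rw [e1, e2]; ring

end Composite



include h1 h2 in
lemma binv_of_zeroPair {i j : Fin n} (hij : i ≠ j) (hz : ZeroPair B i j) : binv B i j = 0 := by
  rw [binv_apply]
  refine Finset.sum_eq_zero fun m _ => ?_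
  cases m with
  | zero => simp [Matrix.one_apply_ne hij]
  | succ m => rw [hz (m + 1) (by omega), mul_zero]

include h1 h2 h3 in
lemma backward_key (hn : 1 ≤ n) (s : Fin n → ℤ) (hs : ∀ i, s i = 1 ∨ s i = -1)
    (hflip : ∀ i j, GammaEdge B i j → s i * s j = -1)
    (hsimple : ∀ i j : Fin n, GammaEdge B i j → B i j ≤ 1)
    (hprime : ∀ i j : Fin n, PrimePair B i j →
      pairing B i j * binv B i j = 0 ∨ pairing B i j * binv B i j = 1) :
    ∀ (d : ℕ) (i j : Fin n), (j : ℕ) ≤ (i : ℕ) + d →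
      s i * binv B i j * s j = |binv B i j| ∧ |binv B i j| ≤ 1 := by
  intro d
  induction d using Nat.strong_induction_on with
  | _ d ih =>
  intro i j hd
  rcases lt_trichotomy i j with hij | rfl | hji
  · by_cases hzero : ZeroPair B i j
    · rw [binv_of_zeroPair B h1 h2 hij.ne hzero]; simp
    by_cases hunit : UnitPair B i j
    · have hedge : GammaEdge B i j := ⟨hij, hunit.1, hunit.2⟩
      have hB1 : B i j = 1 := le_antisymm (hsimple _ _ hedge) hunit.1
      have hb : binv B i j = -1 := by rw [binv_unit B h1 h2 hij hunit.2, hB1]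
      have hf := hflip i j hedge
      rw [hb]
      constructor
      · have habs : |(-1 : ℤ)| = 1 := by norm_num
        rw [habs]; linear_combination -hf
      · norm_num
    by_cases hcomp : CompositePair B i j
    · obtain ⟨v, hiv, hvj, hz⟩ := hcomp
      have hf := compFact B h1 h2 v hn hiv hvj hz
      have hiv' : (i : ℕ) < (v : ℕ) := hiv
      have hvj' : (v : ℕ) < (j : ℕ) := hvj
      obtain ⟨P1, Q1⟩ := ih ((v : ℕ) - (i : ℕ)) (by omega) i v (by omega)
      obtain ⟨P2, Q2⟩ := ih ((j : ℕ) - (v : ℕ)) (by omega) v j (by omega)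
      have hv2 : s v * s v = 1 := by rcases hs v with h | h <;> rw [h] <;> norm_num
      rw [hf, abs_mul]
      constructor
      · linear_combination (s v * binv B v j * s j) * P1 + |binv B i v| * P2
          - (s i * binv B i v * binv B v j * s j) * hv2
      · nlinarith [abs_nonneg (binv B i v), abs_nonneg (binv B v j)]
    · have hp : PrimePair B i j := ⟨hij, hzero, hunit, hcomp⟩
      obtain ⟨L, hpair, hL1, hLne, hLmax⟩ := pairing_spec B h1 h2 hij hzero
      have hss := signChain B h1 h2 h3 s hs hflip L i j hL1 hLne hLmax
      have hsq : ((-1 : ℤ) ^ L) * (-1) ^ L = 1 := by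
        rw [← pow_add, ← two_mul, pow_mul]; norm_num
      rcases hprime i j hp with h0 | h01
      · rw [hpair] at h0
        have hb : binv B i j = 0 :=
          (mul_eq_zero.mp h0).resolve_left (pow_ne_zero _ (by norm_num))
        rw [hb]; simp
      · rw [hpair] at h01
        have hb : binv B i j = (-1) ^ L := by
          calc binv B i j = (((-1 : ℤ) ^ L) * (-1) ^ L) * binv B i j := by rw [hsq, one_mul]
          _ = (-1) ^ L * ((-1) ^ L * binv B i j) := by ring
          _ = (-1) ^ L := by rw [h01, mul_one]
        have habs : |(-1 : ℤ) ^ L| = 1 := by rw [abs_pow]; norm_num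
        rw [hb, habs]
        refine ⟨?_, le_refl 1⟩
        calc s i * (-1) ^ L * s j = (s i * s j) * (-1) ^ L := by ring
        _ = (-1) ^ L * (-1) ^ L := by rw [hss]
        _ = 1 := hsq
  · rw [binv_diag B h1 h2 hn i]
    have hii : s i * s i = 1 := by rcases hs i with h | h <;> rw [h] <;> norm_num
    constructor
    · calc s i * 1 * s i = s i * s i := by ring
      _ = 1 := hii
      _ = |(1 : ℤ)| := by norm_num
    · norm_num
  · rw [binv_lower B h1 h2 hji]; simp

include h1 h2 h3 in
lemma forward_flip (s : Fin n → ℤ) (hs : ∀ i, s i = 1 ∨ s i = -1)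
    (hsign : ∀ i j, s i * binv B i j * s j = |binv B i j|)
    {i j : Fin n} (he : GammaEdge B i j) : s i * s j = -1 := by
  have hu := binv_unit B h1 h2 he.1 he.2.2
  have h := hsign i j
  have hB0 : (0 : ℤ) ≤ B i j := h3 _ _ he.1
  rw [hu, abs_neg, abs_of_nonneg hB0] at h
  have hB1 : 1 ≤ B i j := he.2.1
  rcases hs i with hi | hi <;> rcases hs j with hj | hj <;> rw [hi, hj] at h ⊢ <;>
    norm_num at h ⊢ <;> linarith

end Stmt12Aux

/-- `B` is signable with `|(B⁻¹) i j| ≤ 1` for all `i, j` (`D` is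
simply invertible) iff `Γ_D` is bipartite and simple and every prime pair `(i,j)`
of `D` is simply signable (`⟨i,j⟩ * (B⁻¹) i j ∈ {0, 1}`). -/
theorem stmt12 {n : ℕ} (hn : 1 ≤ n) (B : Matrix (Fin n) (Fin n) ℤ)
    (h1 : ∀ i, B i i = 1) (h2 : ∀ i j : Fin n, j < i → B i j = 0)
    (h3 : ∀ i j : Fin n, i < j → 0 ≤ B i j) :
    (IsSignable B⁻¹ ∧ ∀ i j : Fin n, |B⁻¹ i j| ≤ 1) ↔
      (GammaBipartite B ∧
        (∀ i j : Fin n, GammaEdge B i j → B i j ≤ 1) ∧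
        ∀ i j : Fin n, PrimePair B i j →
          pairing B i j * B⁻¹ i j = 0 ∨ pairing B i j * B⁻¹ i j = 1) := by
  rw [Stmt12Aux.inv_eq B h1 h2]
  constructor
  · rintro ⟨⟨s, hs, hsign⟩, hbd⟩
    have hflip : ∀ i j, GammaEdge B i j → s i * s j = -1 :=
      fun i j he => Stmt12Aux.forward_flip B h1 h2 h3 s hs hsign he
    refine ⟨⟨fun i => decide (s i = 1), ?_⟩, ?_, ?_⟩
    · intro i j he
      have hf := hflip i j he
      rcases hs i with hi | hi <;> rcases hs j with hj | hj <;> rw [hi, hj] at hf <;>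
        simp [hi, hj] at hf ⊢
    · intro i j he
      have h := hbd i j
      rw [Stmt12Aux.binv_unit B h1 h2 he.1 he.2.2, abs_neg, abs_of_nonneg (h3 _ _ he.1)] at h
      exact h
    · intro i j hp
      obtain ⟨L, hpair, hL1, hLne, hLmax⟩ := Stmt12Aux.pairing_spec B h1 h2 hp.1 hp.2.1
      have hss := Stmt12Aux.signChain B h1 h2 h3 s hs hflip L i j hL1 hLne hLmax
      have h := hsign i j
      have heq : pairing B i j * Stmt12Aux.binv B i j = |Stmt12Aux.binv B i j| := by
        rw [hpair, ← hss]; linear_combination h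
      rw [heq]
      have hb1 := hbd i j
      have hb0 := abs_nonneg (Stmt12Aux.binv B i j)
      omega
  · rintro ⟨⟨c, hc⟩, hsimple, hprime⟩
    set s : Fin n → ℤ := fun i => if c i then 1 else -1 with hsdef
    have hs : ∀ i, s i = 1 ∨ s i = -1 := by
      intro i; by_cases h : c i <;> simp [hsdef, h]
    have hflip : ∀ i j, GammaEdge B i j → s i * s j = -1 := by
      intro i j he
      have hne := hc i j he
      by_cases hci : c i <;> by_cases hcj : c j <;> simp [hsdef, hci, hcj] at hne ⊢
    have key := Stmt12Aux.backward_key B h1 h2 h3 hn s hs hflip hsimple hprime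
    exact ⟨⟨s, hs, fun i j => (key (j : ℕ) i j (by omega)).1⟩,
      fun i j => (key (j : ℕ) i j (by omega)).2⟩
end
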